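/- arXiv:2507.20450 — 6 statements merged into one kernel-verified Lean document; each statement's English description precedes it below -/
import Mathlib

section
/- Let N ≥ 3. Assume lim_{s→∞} f'(s)F(s) = q and lim_{s→∞} f'(s)²/(f(s)f''(s)) = q with q > 1. Then there exists C > 0, depending only on N and q, such that for any functions η₁, η₂ : [ρ₀,∞) → ℝ with ηᵢ(ρ) → 0 as ρ → ∞ (i = 1,2) there exists ρ₁ ≥ ρ₀ such that |N[η₁](ρ) − N[η₂](ρ)| ≤ C·(|η₁(ρ)| + |η₂(ρ)|)·|η₁(ρ) − η₂(ρ)| for all ρ ≥ ρ₁. -/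
open Set Filter MeasureTheory
open scoped Topology

set_option maxHeartbeats 4000000 in
/-- nonlinear estimate: for `N ≥ 3` and `q > 1` there is a
constant `C > 0`, depending only on `N` and `q`, such that whenever `f, F, φ`
are as in the context (with both limits equal to `q`) and `η₁, η₂ → 0` at
infinity, one has `|N[η₁](ρ) − N[η₂](ρ)| ≤ C(|η₁(ρ)|+|η₂(ρ)|)|η₁(ρ)−η₂(ρ)|`
for all sufficiently large `ρ`, where
`N[η](ρ) = (2N−4q)·(F(φ)/φ)·(f(φ(1+η)) − f(φ) − f'(φ)φη)`. -/
theorem nonlinear_estimate (N : ℕ) (hN : 3 ≤ N) (q : ℝ) (hq : 1 < q) :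
    ∃ C : ℝ, 0 < C ∧
      ∀ f F : ℝ → ℝ,
        ContDiffOn ℝ 2 f (Set.Ioi 0) →
        (∀ s : ℝ, 0 < s → 0 < f s) →
        (∀ s : ℝ, 0 < s → 0 < deriv f s) →
        (∀ s : ℝ, 0 < s →
          MeasureTheory.IntegrableOn (fun t => (f t)⁻¹) (Set.Ioi s)) →
        (∀ s : ℝ, F s = ∫ t in Set.Ioi s, (f t)⁻¹) →
        Filter.Tendsto (fun s => deriv f s * F s) Filter.atTop (nhds q) →
        Filter.Tendsto (fun s => (deriv f s) ^ 2 / (f s * deriv (deriv f) s))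
          Filter.atTop (nhds q) →
        ∀ (ρ₀ : ℝ) (φ : ℝ → ℝ),
          (∀ ρ ∈ Set.Ici ρ₀, 0 < φ ρ) →
          (∀ ρ ∈ Set.Ici ρ₀,
            HasDerivWithinAt φ (2 * f (φ ρ) * F (φ ρ)) (Set.Ici ρ₀) ρ) →
          Filter.Tendsto φ Filter.atTop Filter.atTop →
          ∀ η₁ η₂ : ℝ → ℝ,
            Filter.Tendsto η₁ Filter.atTop (nhds 0) →
            Filter.Tendsto η₂ Filter.atTop (nhds 0) →
            ∃ ρ₁ : ℝ, ρ₀ ≤ ρ₁ ∧ ∀ ρ ≥ ρ₁,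
              |(2 * (N : ℝ) - 4 * q) * (F (φ ρ) / φ ρ) *
                  (f (φ ρ * (1 + η₁ ρ)) - f (φ ρ) - deriv f (φ ρ) * φ ρ * η₁ ρ) -
                (2 * (N : ℝ) - 4 * q) * (F (φ ρ) / φ ρ) *
                  (f (φ ρ * (1 + η₂ ρ)) - f (φ ρ) - deriv f (φ ρ) * φ ρ * η₂ ρ)| ≤
              C * (|η₁ ρ| + |η₂ ρ|) * |η₁ ρ - η₂ ρ| := by
  have hq0 : (0:ℝ) < q - 1 := by linarith
  set M : ℝ := 4 * (q + 1) / (q - 1) with hM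
  have hMpos : 0 < M := by rw [hM]; positivity
  set m : ℕ := ⌈M⌉₊ with hmdef
  have hMm : M ≤ (m : ℝ) := Nat.le_ceil M
  have hmpos : (0:ℝ) < (m : ℝ) := lt_of_lt_of_le hMpos hMm
  have hq1pos : (0:ℝ) < q + 1 := by linarith
  have h8m : (0:ℝ) < (8:ℝ) ^ m := by positivity
  clear_value m
  clear_value M
  refine ⟨(|2 * (N:ℝ) - 4 * q| + 1) * ((q + 1) * m * 8 ^ m),
    mul_pos (by positivity) (mul_pos (mul_pos hq1pos hmpos) h8m), ?_⟩
  intro f F hf hfpos hf'pos hFint hFdef hlim1 hlim2 ρ₀ φ hφpos hφD hφtop η₁ η₂ hη₁ hη₂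
  -- basic differentiability facts
  have hfc : ContinuousOn f (Ioi 0) := hf.continuousOn
  have hfd : DifferentiableOn ℝ f (Ioi (0:ℝ)) := hf.differentiableOn two_ne_zero
  have hf'c : ContDiffOn ℝ 1 (deriv f) (Ioi (0:ℝ)) :=
    hf.deriv_of_isOpen isOpen_Ioi (by norm_num)
  have hfd' : DifferentiableOn ℝ (deriv f) (Ioi (0:ℝ)) := hf'c.differentiableOn one_ne_zero
  have hDf : ∀ s : ℝ, 0 < s → HasDerivAt f (deriv f s) s := fun s hs =>
    ((hfd s hs).differentiableAt (isOpen_Ioi.mem_nhds hs)).hasDerivAt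
  have hDf' : ∀ s : ℝ, 0 < s → HasDerivAt (deriv f) (deriv (deriv f) s) s := fun s hs =>
    ((hfd' s hs).differentiableAt (isOpen_Ioi.mem_nhds hs)).hasDerivAt
  have hfInvC : ContinuousOn (fun t => (f t)⁻¹) (Ioi (0:ℝ)) :=
    hfc.inv₀ (fun t ht => (hfpos t ht).ne')
  have hFnonneg : ∀ s : ℝ, 0 < s → 0 ≤ F s := by
    intro s hs
    rw [hFdef s]
    apply setIntegral_nonneg measurableSet_Ioi
    intro t ht
    exact inv_nonneg.mpr (hfpos t (lt_trans hs ht)).le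
  -- derivative of F
  have hDF : ∀ s : ℝ, 0 < s → HasDerivAt F (-(f s)⁻¹) s := by
    intro s hs
    have ha0 : 0 < s / 2 := by linarith
    have has : s / 2 < s := by linarith
    have hkey : ∀ u ∈ Ioi (s/2), F u = F (s/2) - ∫ t in (s/2)..u, (f t)⁻¹ := by
      intro u hu
      have hau : s/2 ≤ u := le_of_lt hu
      have hu0 : 0 < u := lt_trans ha0 hu
      have hsplit : Ioc (s/2) u ∪ Ioi u = Ioi (s/2) := Ioc_union_Ioi_eq_Ioi hau
      have hint1 : IntegrableOn (fun t => (f t)⁻¹) (Ioc (s/2) u) :=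
        (hFint (s/2) ha0).mono_set Ioc_subset_Ioi_self
      have hint2 : IntegrableOn (fun t => (f t)⁻¹) (Ioi u) := hFint u hu0
      rw [intervalIntegral.integral_of_le hau, hFdef u, hFdef (s/2), ← hsplit,
        setIntegral_union (Ioc_disjoint_Ioi le_rfl) measurableSet_Ioi hint1 hint2]
      ring
    have hd2 : HasDerivAt (fun u => ∫ t in (s/2)..u, (f t)⁻¹) (f s)⁻¹ s :=
      intervalIntegral.integral_hasDerivAt_right
        ((intervalIntegrable_iff_integrableOn_Ioc_of_le has.le).mpr
          ((hFint (s/2) ha0).mono_set Ioc_subset_Ioi_self))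
        (hfInvC.stronglyMeasurableAtFilter isOpen_Ioi s hs)
        (hfInvC.continuousAt (isOpen_Ioi.mem_nhds hs))
    have hd3 : HasDerivAt (fun u => F (s/2) - ∫ t in (s/2)..u, (f t)⁻¹) (-(f s)⁻¹) s := by
      simpa using hd2.const_sub (F (s/2))
    exact hd3.congr_of_eventuallyEq (eventuallyEq_of_mem (Ioi_mem_nhds has) hkey)
  -- asymptotic window
  have hwin0 : ∀ᶠ s in atTop, ((q+1)/2 < deriv f s * F s ∧ deriv f s * F s < q+1) ∧
      1 < (deriv f s)^2 / (f s * deriv (deriv f) s) := by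
    filter_upwards [hlim1 (Ioo_mem_nhds (show (q+1)/2 < q by linarith) (show q < q+1 by linarith)),
      hlim2 (Ioi_mem_nhds hq)] with s h1 h2
    exact ⟨⟨h1.1, h1.2⟩, h2⟩
  obtain ⟨S₀', hS₀'⟩ := eventually_atTop.mp hwin0
  set S₀ := max S₀' 1 with hS₀def
  have hS₀1 : (1:ℝ) ≤ S₀ := le_max_right _ _
  have hS₀pos : (0:ℝ) < S₀ := lt_of_lt_of_le one_pos hS₀1
  have hwin : ∀ s, S₀ ≤ s → ((q+1)/2 < deriv f s * F s ∧ deriv f s * F s < q+1) ∧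
      1 < (deriv f s)^2 / (f s * deriv (deriv f) s) := fun s hs =>
    hS₀' s (le_trans (le_max_left _ _) hs)
  -- second derivative positivity and bound
  have hf'' : ∀ s, S₀ ≤ s →
      0 < deriv (deriv f) s ∧ f s * deriv (deriv f) s < (deriv f s)^2 := by
    intro s hs
    have hs0 : 0 < s := lt_of_lt_of_le hS₀pos hs
    have h2 := (hwin s hs).2
    have hfp := hfpos s hs0
    have hf'p := hf'pos s hs0
    have hden : 0 < f s * deriv (deriv f) s := by
      rcases lt_trichotomy (f s * deriv (deriv f) s) 0 with h | h | h
      · have : (deriv f s)^2 / (f s * deriv (deriv f) s) < 0 :=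
          div_neg_of_pos_of_neg (by positivity) h
        linarith
      · rw [h, div_zero] at h2; linarith
      · exact h
    refine ⟨?_, (one_lt_div hden).mp h2⟩
    by_contra h
    push_neg at h
    nlinarith [mul_nonpos_of_nonneg_of_nonpos hfp.le h]
  -- lower bound for f * F
  have hGmono : MonotoneOn (fun t => f t * F t - (q-1)/2 * t) (Ici S₀) := by
    have hder : ∀ t, 0 < t → HasDerivAt (fun t => f t * F t - (q-1)/2 * t)
        (deriv f t * F t + f t * -(f t)⁻¹ - (q-1)/2 * 1) t := fun t ht0 =>
      ((hDf t ht0).mul (hDF t ht0)).sub ((hasDerivAt_id t).const_mul ((q-1)/2))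
    apply monotoneOn_of_deriv_nonneg (convex_Ici S₀)
    · intro t ht
      exact (hder t (lt_of_lt_of_le hS₀pos ht)).continuousAt.continuousWithinAt
    · intro t ht
      rw [interior_Ici] at ht
      exact (hder t (lt_trans hS₀pos ht)).differentiableAt.differentiableWithinAt
    · intro t ht
      rw [interior_Ici] at ht
      have ht0 : 0 < t := lt_trans hS₀pos ht
      rw [(hder t ht0).deriv]
      have hinv : f t * (f t)⁻¹ = 1 := mul_inv_cancel₀ (hfpos t ht0).ne'
      have h1 := (hwin t ht.le).1.1
      nlinarith [h1]
  have hfF_lb : ∀ s, 2*S₀ ≤ s → (q-1)/4 * s ≤ f s * F s := by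
    intro s hs
    have hs0 : 0 < s := by linarith
    have hSs : S₀ ≤ s := by linarith
    have hmono := hGmono (self_mem_Ici) (mem_Ici.mpr hSs) hSs
    simp only at hmono
    have h0 : 0 ≤ f S₀ * F S₀ := mul_nonneg (hfpos S₀ hS₀pos).le (hFnonneg S₀ hS₀pos)
    nlinarith
  have hFpos : ∀ t, 2*S₀ ≤ t → 0 < F t := by
    intro t ht
    have ht0 : 0 < t := by linarith
    have h1 := hfF_lb t ht
    by_contra h
    push_neg at h
    nlinarith [mul_nonpos_of_nonneg_of_nonpos (hfpos t ht0).le h]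
  -- ratio bounds
  have hratio1 : ∀ t, 2*S₀ ≤ t → t * deriv f t ≤ (m:ℝ) * f t := by
    intro t ht
    have ht0 : 0 < t := by linarith
    have hFt : 0 < F t := hFpos t ht
    have h1 : deriv f t * F t < q + 1 := (hwin t (by linarith)).1.2
    have h2 : (q-1)/4 * t ≤ f t * F t := hfF_lb t ht
    have key : (t * deriv f t) * F t ≤ ((m:ℝ) * f t) * F t := by
      have e2 : t * (deriv f t * F t) ≤ t * (q + 1) :=
        mul_le_mul_of_nonneg_left h1.le ht0.le
      have e3 : t * (q+1) = M * ((q-1)/4 * t) := by rw [hM]; field_simp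
      have e4 : M * ((q-1)/4 * t) ≤ M * (f t * F t) :=
        mul_le_mul_of_nonneg_left h2 hMpos.le
      have e5 : M * (f t * F t) ≤ (m:ℝ) * (f t * F t) :=
        mul_le_mul_of_nonneg_right hMm
          (mul_nonneg (hfpos t ht0).le hFt.le)
      calc (t * deriv f t) * F t = t * (deriv f t * F t) := by ring
        _ ≤ t * (q+1) := e2
        _ = M * ((q-1)/4 * t) := e3
        _ ≤ M * (f t * F t) := e4
        _ ≤ (m:ℝ) * (f t * F t) := e5
        _ = ((m:ℝ) * f t) * F t := by ring
    exact le_of_mul_le_mul_right key hFt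
  have hratio2 : ∀ t, 2*S₀ ≤ t → t * deriv (deriv f) t ≤ (m:ℝ) * deriv f t := by
    intro t ht
    have ht0 : 0 < t := by linarith
    have hfp := hfpos t ht0
    have hf'p := hf'pos t ht0
    have h3 := (hf'' t (by linarith)).2
    have h4 := hratio1 t ht
    have key : (t * deriv (deriv f) t) * f t ≤ ((m:ℝ) * deriv f t) * f t := by
      nlinarith [mul_le_mul_of_nonneg_left h3.le ht0.le,
        mul_le_mul_of_nonneg_right h4 hf'p.le]
    exact le_of_mul_le_mul_right key hfp
  have hS₁pos : (0:ℝ) < 2*S₀ := by linarith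
  have hm1 : 1 ≤ m := hmdef ▸ Nat.one_le_ceil_iff.mpr hMpos
  -- antitone quotients
  have hA1 : AntitoneOn (fun t => deriv f t / t ^ m) (Ici (2*S₀)) := by
    apply antitoneOn_of_deriv_nonpos (convex_Ici _)
    · intro t ht
      have ht0 : 0 < t := lt_of_lt_of_le hS₁pos ht
      exact ((hDf' t ht0).div (hasDerivAt_pow m t)
        (pow_ne_zero m ht0.ne')).continuousAt.continuousWithinAt
    · intro t ht
      rw [interior_Ici] at ht
      have ht0 : 0 < t := lt_trans hS₁pos ht
      exact ((hDf' t ht0).div (hasDerivAt_pow m t)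
        (pow_ne_zero m ht0.ne')).differentiableAt.differentiableWithinAt
    · intro t ht
      rw [interior_Ici] at ht
      have ht0 : 0 < t := lt_trans hS₁pos ht
      have hD := (hDf' t ht0).div (hasDerivAt_pow m t) (pow_ne_zero m ht0.ne')
      rw [show (fun t => deriv f t / t ^ m) = (deriv f / fun x => x ^ m) from rfl, hD.deriv]
      apply div_nonpos_of_nonpos_of_nonneg _ (by positivity)
      have htm : t ^ m = t * t ^ (m-1) := by
        conv_lhs => rw [show m = (m-1)+1 from (Nat.succ_pred_eq_of_pos hm1).symm]
        rw [pow_succ']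
      have hr := hratio2 t ht.le
      have hpow : (0:ℝ) ≤ t ^ (m-1) := by positivity
      have hcast : ((m:ℕ):ℝ) = (m:ℝ) := rfl
      rw [htm]
      nlinarith [mul_le_mul_of_nonneg_right hr hpow]
  have hA2 : AntitoneOn (fun t => f t / t ^ m) (Ici (2*S₀)) := by
    apply antitoneOn_of_deriv_nonpos (convex_Ici _)
    · intro t ht
      have ht0 : 0 < t := lt_of_lt_of_le hS₁pos ht
      exact ((hDf t ht0).div (hasDerivAt_pow m t)
        (pow_ne_zero m ht0.ne')).continuousAt.continuousWithinAt
    · intro t ht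
      rw [interior_Ici] at ht
      have ht0 : 0 < t := lt_trans hS₁pos ht
      exact ((hDf t ht0).div (hasDerivAt_pow m t)
        (pow_ne_zero m ht0.ne')).differentiableAt.differentiableWithinAt
    · intro t ht
      rw [interior_Ici] at ht
      have ht0 : 0 < t := lt_trans hS₁pos ht
      have hD := (hDf t ht0).div (hasDerivAt_pow m t) (pow_ne_zero m ht0.ne')
      rw [show (fun t => f t / t ^ m) = (f / fun x => x ^ m) from rfl, hD.deriv]
      apply div_nonpos_of_nonpos_of_nonneg _ (by positivity)
      have htm : t ^ m = t * t ^ (m-1) := by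
        conv_lhs => rw [show m = (m-1)+1 from (Nat.succ_pred_eq_of_pos hm1).symm]
        rw [pow_succ']
      have hr := hratio1 t ht.le
      have hpow : (0:ℝ) ≤ t ^ (m-1) := by positivity
      rw [htm]
      nlinarith [mul_le_mul_of_nonneg_right hr hpow]
  -- monotonicity of f and deriv f
  have hfmono : MonotoneOn f (Ici (2*S₀)) := by
    apply monotoneOn_of_deriv_nonneg (convex_Ici _)
    · intro t ht
      exact (hDf t (lt_of_lt_of_le hS₁pos ht)).continuousAt.continuousWithinAt
    · intro t ht
      rw [interior_Ici] at ht
      exact (hDf t (lt_trans hS₁pos ht)).differentiableAt.differentiableWithinAt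
    · intro t ht
      rw [interior_Ici] at ht
      exact (hf'pos t (lt_trans hS₁pos ht)).le
  have hf'mono : MonotoneOn (deriv f) (Ici S₀) := by
    apply monotoneOn_of_deriv_nonneg (convex_Ici _)
    · intro t ht
      exact (hDf' t (lt_of_lt_of_le hS₀pos ht)).continuousAt.continuousWithinAt
    · intro t ht
      rw [interior_Ici] at ht
      exact (hDf' t (lt_trans hS₀pos ht)).differentiableAt.differentiableWithinAt
    · intro t ht
      rw [interior_Ici] at ht
      exact (hf'' t (le_of_lt ht)).1.le
  -- doubling bounds
  have hdbl1 : ∀ s, 2*S₀ ≤ s → deriv f (2*s) ≤ 2^m * deriv f s := by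
    intro s hs
    have hs0 : 0 < s := lt_of_lt_of_le hS₁pos hs
    have h : deriv f (2*s) / (2*s)^m ≤ deriv f s / s^m :=
      hA1 (mem_Ici.mpr hs) (mem_Ici.mpr (by linarith)) (by linarith)
    have hp1 : (0:ℝ) < (2*s)^m := by positivity
    have hp2 : (0:ℝ) < s^m := by positivity
    rw [div_le_div_iff₀ hp1 hp2] at h
    have hp : (2*s)^m = 2^m * s^m := mul_pow 2 s m
    rw [hp] at h
    exact le_of_mul_le_mul_right
      (by nlinarith [h] : deriv f (2*s) * s^m ≤ (2^m * deriv f s) * s^m) hp2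
  have hdbl2 : ∀ s, 2*S₀ ≤ s/2 → f s ≤ 2^m * f (s/2) := by
    intro s hs
    have hs20 : 0 < s/2 := lt_of_lt_of_le hS₁pos hs
    have hs0 : 0 < s := by linarith
    have h : f s / s^m ≤ f (s/2) / (s/2)^m :=
      hA2 (mem_Ici.mpr hs) (mem_Ici.mpr (by linarith : 2*S₀ ≤ s)) (by linarith)
    have hp1 : (0:ℝ) < s^m := by positivity
    have hp2 : (0:ℝ) < (s/2)^m := by positivity
    rw [div_le_div_iff₀ hp1 hp2] at h
    have h2m : (0:ℝ) < 2^m := by positivity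
    have hsm : (0:ℝ) < s^m := by positivity
    have e : (s/2)^m = s^m / 2^m := div_pow s 2 m
    rw [e] at h
    have h2 := mul_le_mul_of_nonneg_right h h2m.le
    have e2 : f s * (s^m / 2^m) * 2^m = f s * s^m := by field_simp
    have e3 : f (s/2) * s^m * 2^m = (2^m * f (s/2)) * s^m := by ring
    rw [e2, e3] at h2
    exact le_of_mul_le_mul_right h2 hsm
  -- bound on f'' on doubling interval
  have hf''bd : ∀ s, 4*S₀ ≤ s → ∀ ζ ∈ Icc (s/2) (2*s),
      deriv (deriv f) ζ ≤ 8^m * (deriv f s)^2 / f s := by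
    intro s hs ζ hζ
    have hs0 : 0 < s := by linarith
    have hs2 : 2*S₀ ≤ s/2 := by linarith
    have hζS : S₀ ≤ ζ := le_trans (by linarith) hζ.1
    have hζ0 : 0 < ζ := lt_of_lt_of_le hS₀pos hζS
    have hfsp := hfpos s hs0
    have hf'ζ := hf'pos ζ hζ0
    have hfζ := hfpos ζ hζ0
    have hsq := (hf'' ζ hζS).2
    have h''ζ := (hf'' ζ hζS).1
    -- f' ζ ≤ 2^m * f' s
    have h1 : deriv f ζ ≤ deriv f (2*s) :=
      hf'mono (mem_Ici.mpr hζS) (mem_Ici.mpr (by linarith)) hζ.2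
    have h2 : deriv f ζ ≤ 2^m * deriv f s := h1.trans (hdbl1 s (by linarith))
    -- f s ≤ 2^m * f ζ
    have h3 : f (s/2) ≤ f ζ := hfmono (mem_Ici.mpr hs2) (mem_Ici.mpr (le_trans hs2 hζ.1)) hζ.1
    have h4 : f s ≤ 2^m * f ζ := by
      have := hdbl2 s hs2
      nlinarith [this, h3, (by positivity : (0:ℝ) < (2:ℝ)^m)]
    -- combine
    rw [le_div_iff₀ hfsp]
    have e1 : deriv (deriv f) ζ * f s ≤ deriv (deriv f) ζ * (2^m * f ζ) :=
      mul_le_mul_of_nonneg_left h4 h''ζ.le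
    have e2 : deriv (deriv f) ζ * (2^m * f ζ) = 2^m * (f ζ * deriv (deriv f) ζ) := by ring
    have e3 : (2:ℝ)^m * (f ζ * deriv (deriv f) ζ) ≤ 2^m * (deriv f ζ)^2 :=
      mul_le_mul_of_nonneg_left hsq.le (by positivity)
    have e4 : (deriv f ζ)^2 ≤ (2^m * deriv f s)^2 := by
      apply pow_le_pow_left₀ hf'ζ.le h2
    have e5 : ((2:ℝ)^m * deriv f s)^2 = 4^m * (deriv f s)^2 := by
      rw [mul_pow]
      congr 1
      rw [← pow_mul, mul_comm m 2, pow_mul]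
      norm_num
    have e6 : (2:ℝ)^m * (4^m * (deriv f s)^2) = 8^m * (deriv f s)^2 := by
      rw [← mul_assoc, ← mul_pow]
      norm_num
    calc deriv (deriv f) ζ * f s ≤ 2^m * (f ζ * deriv (deriv f) ζ) := by rw [← e2]; exact e1
      _ ≤ 2^m * (deriv f ζ)^2 := e3
      _ ≤ 2^m * (4^m * (deriv f s)^2) := by
          apply mul_le_mul_of_nonneg_left _ (by positivity)
          rw [← e5]; exact e4
      _ = 8^m * (deriv f s)^2 := e6
  -- the main pointwise estimate
  have hmain : ∀ s : ℝ, 4*S₀ ≤ s → ∀ e₁ e₂ : ℝ, |e₁| ≤ 1/2 → |e₂| ≤ 1/2 →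
      |(2 * (N : ℝ) - 4 * q) * (F s / s) * (f (s * (1 + e₁)) - f s - deriv f s * s * e₁) -
        (2 * (N : ℝ) - 4 * q) * (F s / s) * (f (s * (1 + e₂)) - f s - deriv f s * s * e₂)| ≤
      (|2 * (N:ℝ) - 4 * q| + 1) * ((q + 1) * m * 8 ^ m) * (|e₁| + |e₂|) * |e₁ - e₂| := by
    intro s hs e₁ e₂ he₁ he₂
    have hs0 : 0 < s := by linarith
    have hsS₀ : S₀ ≤ s := by linarith
    have hfsp := hfpos s hs0
    have hf'sp := hf'pos s hs0
    set x := s * (1 + e₁) with hxdef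
    set y := s * (1 + e₂) with hydef
    have he₁' := abs_le.mp he₁
    have he₂' := abs_le.mp he₂
    have hxK : x ∈ Icc (s/2) (2*s) := by
      constructor
      · rw [hxdef]; nlinarith
      · rw [hxdef]; nlinarith
    have hyK : y ∈ Icc (s/2) (2*s) := by
      constructor
      · rw [hydef]; nlinarith
      · rw [hydef]; nlinarith
    have hsK : s ∈ Icc (s/2) (2*s) := by constructor <;> nlinarith
    set B : ℝ := 8^m * (deriv f s)^2 / f s with hBdef
    have hBnn : 0 ≤ B := by rw [hBdef]; positivity
    -- Lipschitz bound for deriv f on the doubling interval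
    have hLip : ∀ t ∈ Icc (s/2) (2*s), |deriv f t - deriv f s| ≤ B * |t - s| := by
      intro t ht
      have := Convex.norm_image_sub_le_of_norm_hasDerivWithin_le
        (f := deriv f) (f' := fun ζ => deriv (deriv f) ζ) (s := Icc (s/2) (2*s))
        (fun ζ hζ => (hDf' ζ (by linarith [hζ.1])).hasDerivWithinAt)
        (fun ζ hζ => by
          rw [Real.norm_eq_abs, abs_of_pos (hf'' ζ (by linarith [hζ.1])).1]
          exact hf''bd s hs ζ hζ)
        (convex_Icc _ _) hsK ht
      simpa [Real.norm_eq_abs] using this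
    -- distances in terms of e₁, e₂
    set Sg : ℝ := |e₁| + |e₂| with hSgdef
    have hSgnn : 0 ≤ Sg := by rw [hSgdef]; positivity
    have habs₁ : -(s*Sg) ≤ s*e₁ ∧ s*e₁ ≤ s*Sg := by
      constructor <;> [skip; skip] <;>
        nlinarith [le_abs_self e₁, neg_abs_le e₁, abs_nonneg e₁, abs_nonneg e₂]
    have habs₂ : -(s*Sg) ≤ s*e₂ ∧ s*e₂ ≤ s*Sg := by
      constructor <;> [skip; skip] <;>
        nlinarith [le_abs_self e₂, neg_abs_le e₂, abs_nonneg e₁, abs_nonneg e₂]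
    have hK'sub : Icc (min x y) (max x y) ⊆ Icc (s/2) (2*s) :=
      Icc_subset_Icc (le_min hxK.1 hyK.1) (max_le hxK.2 hyK.2)
    have htdist : ∀ t ∈ Icc (min x y) (max x y), |t - s| ≤ s * Sg := by
      intro t ht
      rw [abs_le]
      have h1 : min x y ≤ t := ht.1
      have h2 : t ≤ max x y := ht.2
      have hx1 : x - s = s*e₁ := by rw [hxdef]; ring
      have hy1 : y - s = s*e₂ := by rw [hydef]; ring
      constructor
      · rcases le_total x y with hc | hc
        · rw [min_eq_left hc] at h1; nlinarith [habs₁.1]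
        · rw [min_eq_right hc] at h1; nlinarith [habs₂.1]
      · rcases le_total x y with hc | hc
        · rw [max_eq_right hc] at h2; nlinarith [habs₂.2]
        · rw [max_eq_left hc] at h2; nlinarith [habs₁.2]
    -- MVT for g(t) = f t - f'(s) t on [min x y, max x y]
    have hmvt : |(f y - deriv f s * y) - (f x - deriv f s * x)| ≤ (B * (s*Sg)) * |y - x| := by
      have := Convex.norm_image_sub_le_of_norm_hasDerivWithin_le
        (f := fun u => f u - deriv f s * u) (f' := fun t => deriv f t - deriv f s)
        (s := Icc (min x y) (max x y))
        (fun t ht => by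
          have ht0 : 0 < t := by
            have := (hK'sub ht).1; linarith
          exact ((hDf t ht0).sub ((hasDerivAt_id t).const_mul (deriv f s))).hasDerivWithinAt.congr_deriv (by ring))
        (fun t ht => by
          rw [Real.norm_eq_abs]
          exact (hLip t (hK'sub ht)).trans (mul_le_mul_of_nonneg_left (htdist t ht) hBnn))
        (convex_Icc _ _) ⟨min_le_left x y, le_max_left x y⟩ ⟨min_le_right x y, le_max_right x y⟩
      simpa [Real.norm_eq_abs] using this
    -- assemble
    have hyx : y - x = s * (e₂ - e₁) := by rw [hxdef, hydef]; ring
    have hyxabs : |y - x| = s * |e₁ - e₂| := by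
      rw [hyx, abs_mul, abs_of_pos hs0, abs_sub_comm]
    have hEeq : (2 * (N : ℝ) - 4 * q) * (F s / s) * (f x - f s - deriv f s * s * e₁) -
        (2 * (N : ℝ) - 4 * q) * (F s / s) * (f y - f s - deriv f s * s * e₂) =
        -((2 * (N : ℝ) - 4 * q) * (F s / s)) * ((f y - deriv f s * y) - (f x - deriv f s * x)) := by
      rw [hxdef, hydef]; ring
    rw [hEeq, abs_mul]
    have hFs := hFnonneg s hs0
    have habsA : |(-((2 * (N : ℝ) - 4 * q) * (F s / s)))| = |2 * (N : ℝ) - 4 * q| * (F s / s) := by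
      rw [abs_neg, abs_mul, abs_div, abs_of_nonneg hFs, abs_of_pos hs0]
    rw [habsA]
    -- key quantitative bound : F s * s * B ≤ (q+1) * m * 8^m
    have hFsB : F s * s * B ≤ (q + 1) * m * 8^m := by
      have h1 : deriv f s * F s ≤ q + 1 := ((hwin s hsS₀).1.2).le
      have h2 : s * deriv f s ≤ (m:ℝ) * f s := hratio1 s (by linarith)
      have hFspos : 0 < F s := hFpos s (by linarith)
      have key : (F s * s * B) * f s ≤ ((q+1) * m * 8^m) * f s := by
        rw [hBdef]
        have e0 : F s * s * (8^m * (deriv f s)^2 / f s) * f s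
            = 8^m * ((deriv f s * F s) * (s * deriv f s)) := by
          field_simp
        rw [e0]
        have e1 : (deriv f s * F s) * (s * deriv f s) ≤ (q+1) * ((m:ℝ) * f s) := by
          apply mul_le_mul h1 h2 (by positivity) (by linarith)
        calc (8:ℝ)^m * ((deriv f s * F s) * (s * deriv f s))
            ≤ 8^m * ((q+1) * ((m:ℝ) * f s)) := by
              apply mul_le_mul_of_nonneg_left e1 (by positivity)
          _ = ((q+1) * m * 8^m) * f s := by ring
      exact le_of_mul_le_mul_right key hfsp
    calc |2 * (N : ℝ) - 4 * q| * (F s / s) *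
          |(f y - deriv f s * y) - (f x - deriv f s * x)|
        ≤ |2 * (N : ℝ) - 4 * q| * (F s / s) * ((B * (s*Sg)) * (s * |e₁ - e₂|)) := by
          apply mul_le_mul_of_nonneg_left _ (by positivity)
          rw [← hyxabs]; exact hmvt
      _ = (|2 * (N : ℝ) - 4 * q|) * (F s * s * B) * Sg * |e₁ - e₂| := by
          field_simp
      _ ≤ (|2 * (N:ℝ) - 4 * q| + 1) * ((q + 1) * m * 8 ^ m) * Sg * |e₁ - e₂| := by
          apply mul_le_mul_of_nonneg_right _ (abs_nonneg _)
          apply mul_le_mul_of_nonneg_right _ hSgnn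
          apply mul_le_mul (by linarith [abs_nonneg (2 * (N:ℝ) - 4*q)]) hFsB
          · have : 0 ≤ F s * s := mul_nonneg hFs hs0.le
            nlinarith [hBnn]
          · positivity
  -- conclude: choose ρ₁
  have hev1 : ∀ᶠ ρ in atTop, 4*S₀ ≤ φ ρ := hφtop.eventually_ge_atTop (4*S₀)
  have hev2 : ∀ᶠ ρ in atTop, |η₁ ρ| ≤ 1/2 := by
    have := Metric.tendsto_nhds.mp hη₁ (1/2) one_half_pos
    filter_upwards [this] with ρ hρ
    rw [Real.dist_eq, sub_zero] at hρ
    exact hρ.le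
  have hev3 : ∀ᶠ ρ in atTop, |η₂ ρ| ≤ 1/2 := by
    have := Metric.tendsto_nhds.mp hη₂ (1/2) one_half_pos
    filter_upwards [this] with ρ hρ
    rw [Real.dist_eq, sub_zero] at hρ
    exact hρ.le
  obtain ⟨R, hR⟩ := eventually_atTop.mp ((hev1.and hev2).and hev3)
  refine ⟨max R ρ₀, le_max_right _ _, ?_⟩
  intro ρ hρ
  obtain ⟨⟨h1, h2⟩, h3⟩ := hR ρ (le_trans (le_max_left _ _) hρ)
  exact hmain (φ ρ) h1 (η₁ ρ) (η₂ ρ) h2 h3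
end

section
/- Assume lim_{s→∞} f'(s)F(s) = q with q > 1, and let λ ∈ (0, 2(q−1)). Then there exist ρ₁ ≥ ρ₀ and C > 0 such that for all ρ ≥ ρ₁: ∫_{ρ₁}^{ρ} e^{λτ}·| f(φ(τ))F(φ(τ))/φ(τ) − (q−1) | dτ ≤ C·( ∫_{ρ₁}^{ρ} e^{λτ}·| f'(φ(τ))F(φ(τ)) − q | dτ + e^{λρ₁}·| f(φ(ρ₁))F(φ(ρ₁))/φ(ρ₁) − (q−1) | ). (Here q−1 = 1/(p−1) with p = q/(q−1).) -/
open Set Filter MeasureTheory intervalIntegral Real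

-- derivative of F
lemma aux_F_deriv (f F : ℝ → ℝ)
    (hfc : ContinuousOn f (Set.Ioi 0))
    (hfpos : ∀ s : ℝ, 0 < s → 0 < f s)
    (hfint : ∀ s : ℝ, 0 < s → MeasureTheory.IntegrableOn (fun t => (f t)⁻¹) (Set.Ioi s))
    (hF : ∀ s : ℝ, F s = ∫ t in Set.Ioi s, (f t)⁻¹)
    {s : ℝ} (hs : 0 < s) : HasDerivAt F (-(f s)⁻¹) s := by
  have hinvc : ContinuousOn (fun t => (f t)⁻¹) (Set.Ioi 0) :=
    hfc.inv₀ (fun x hx => (hfpos x hx).ne')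
  have key : ∀ a b : ℝ, 0 < a → a ≤ b → F a = (∫ x in a..b, (f x)⁻¹) + F b := by
    intro a b ha hab
    have hb : 0 < b := ha.trans_le hab
    have hd : Disjoint (Set.Ioc a b) (Set.Ioi b) := Set.Ioc_disjoint_Ioi_same
    have h1 := MeasureTheory.setIntegral_union hd measurableSet_Ioi
      ((hfint a ha).mono_set Set.Ioc_subset_Ioi_self) (hfint b hb)
    rw [Set.Ioc_union_Ioi_eq_Ioi hab] at h1
    rw [hF a, hF b, intervalIntegral.integral_of_le hab, h1]
  have key2 : ∀ a b : ℝ, 0 < a → 0 < b → F b = F a - ∫ x in a..b, (f x)⁻¹ := by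
    intro a b ha hb
    rcases le_total a b with h | h
    · have := key a b ha h; linarith
    · have := key b a hb h
      rw [intervalIntegral.integral_symm]; linarith
  have hev : F =ᶠ[nhds s] fun t => F (s/2) - ∫ x in (s/2)..t, (f x)⁻¹ := by
    filter_upwards [isOpen_Ioi.mem_nhds hs] with t ht
    exact key2 (s/2) t (half_pos hs) ht
  have hint : IntervalIntegrable (fun x => (f x)⁻¹) MeasureTheory.volume (s/2) s := by
    apply ContinuousOn.intervalIntegrable
    apply hinvc.mono
    rw [Set.uIcc_of_le (by linarith)]
    intro x hx; exact lt_of_lt_of_le (half_pos hs) hx.1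
  have hmeas := ContinuousOn.stronglyMeasurableAtFilter (μ := MeasureTheory.volume)
    isOpen_Ioi hinvc s hs
  have hca : ContinuousAt (fun x => (f x)⁻¹) s := hinvc.continuousAt (isOpen_Ioi.mem_nhds hs)
  have hder := intervalIntegral.integral_hasDerivAt_right hint hmeas hca
  have : HasDerivAt (fun t => F (s/2) - ∫ x in (s/2)..t, (f x)⁻¹) (-(f s)⁻¹) s := by
    simpa using hder.const_sub (F (s/2))
  exact this.congr_of_eventuallyEq hev

-- f s * F s / s → q - 1
lemma aux_limit (f F : ℝ → ℝ) (q : ℝ)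
    (hGd : ∀ s : ℝ, 0 < s → HasDerivAt (fun t => f t * F t) (deriv f s * F s - 1) s)
    (hG'c : ContinuousOn (fun t => deriv f t * F t - 1) (Set.Ioi 0))
    (hlim : Filter.Tendsto (fun s => deriv f s * F s) Filter.atTop (nhds q)) :
    ∀ ε > 0, ∀ᶠ s in Filter.atTop, |f s * F s / s - (q - 1)| < ε := by
  intro ε hε
  have h1 : ∀ᶠ t in Filter.atTop, |deriv f t * F t - q| < ε / 2 := by
    have := Metric.tendsto_nhds.mp hlim (ε/2) (by positivity)
    simpa [Real.dist_eq] using this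
  rw [Filter.eventually_atTop] at h1
  obtain ⟨s₀', hs₀'⟩ := h1
  set s₀ : ℝ := max s₀' 1 with hs₀def
  have hs₀pos : (0:ℝ) < s₀ := lt_of_lt_of_le one_pos (le_max_right _ _)
  have hs₀b : ∀ t : ℝ, s₀ ≤ t → |deriv f t * F t - q| < ε / 2 :=
    fun t ht => hs₀' t (le_trans (le_max_left _ _) ht)
  set K : ℝ := |f s₀ * F s₀ - (q-1) * s₀| with hKdef
  have hK : 0 ≤ K := abs_nonneg _
  rw [Filter.eventually_atTop]
  refine ⟨max s₀ (2*K/ε + 1), fun s hs => ?_⟩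
  have hss₀ : s₀ ≤ s := le_trans (le_max_left _ _) hs
  have hs1 : 2*K/ε + 1 ≤ s := le_trans (le_max_right _ _) hs
  have hspos : 0 < s := lt_of_lt_of_le hs₀pos hss₀
  -- FTC
  have hsub : Set.uIcc s₀ s ⊆ Set.Ioi 0 := by
    rw [Set.uIcc_of_le hss₀]
    intro x hx; exact lt_of_lt_of_le hs₀pos hx.1
  have hInt : IntervalIntegrable (fun t => deriv f t * F t - 1) MeasureTheory.volume s₀ s :=
    (hG'c.mono hsub).intervalIntegrable
  have hftc : (∫ t in s₀..s, (deriv f t * F t - 1)) = f s * F s - f s₀ * F s₀ := by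
    apply intervalIntegral.integral_eq_sub_of_hasDerivAt
    · intro t ht
      exact hGd t (hsub ht)
    · exact hInt
  have hsplit : (∫ t in s₀..s, ((deriv f t * F t - 1) - (q-1)))
      = (f s * F s - f s₀ * F s₀) - (q-1)*(s-s₀) := by
    rw [intervalIntegral.integral_sub hInt intervalIntegrable_const, hftc,
      intervalIntegral.integral_const, smul_eq_mul]
    ring
  have hbd : |(f s * F s - f s₀ * F s₀) - (q-1)*(s-s₀)| ≤ ε/2 * |s - s₀| := by
    rw [← hsplit, ← Real.norm_eq_abs]
    apply intervalIntegral.norm_integral_le_of_norm_le_const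
    intro x hx
    rw [Set.uIoc_of_le hss₀] at hx
    have : |deriv f x * F x - q| < ε/2 := hs₀b x (le_of_lt hx.1)
    rw [Real.norm_eq_abs]
    have heq : deriv f x * F x - 1 - (q-1) = deriv f x * F x - q := by ring
    rw [heq]
    exact le_of_lt this
  rw [abs_of_nonneg (by linarith : (0:ℝ) ≤ s - s₀)] at hbd
  -- conclude
  have hεs : 2*K + ε ≤ ε * s := by
    have h2 : ε * (2*K/ε + 1) ≤ ε * s := mul_le_mul_of_nonneg_left hs1 hε.le
    have h3 : ε * (2*K/ε) = 2*K := by field_simp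
    nlinarith
  have hnum : |f s * F s - (q-1)*s| < ε * s := by
    have htri : |f s * F s - (q-1)*s| ≤
        |(f s * F s - f s₀ * F s₀) - (q-1)*(s-s₀)| + K := by
      rw [hKdef]
      have := abs_add_le ((f s * F s - f s₀ * F s₀) - (q-1)*(s-s₀)) (f s₀ * F s₀ - (q-1)*s₀)
      calc |f s * F s - (q-1)*s|
          = |((f s * F s - f s₀ * F s₀) - (q-1)*(s-s₀)) + (f s₀ * F s₀ - (q-1)*s₀)| := by
            ring_nf
        _ ≤ _ := this
    have hs₀pos' : 0 < s₀ := hs₀pos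
    nlinarith
  have : |f s * F s / s - (q-1)| = |f s * F s - (q-1)*s| / s := by
    rw [show f s * F s / s - (q-1) = (f s * F s - (q-1)*s) / s by field_simp,
      abs_div, abs_of_pos hspos]
  rw [this, div_lt_iff₀ hspos]
  linarith [hnum]

set_option maxHeartbeats 2000000 in
/-- If `f'(s)F(s) → q` with `q > 1` and `λ ∈ (0, 2(q−1))`, there
exist `ρ₁ ≥ ρ₀` and `C > 0` such that for all `ρ ≥ ρ₁`,
`∫_{ρ₁}^{ρ} e^{λτ} |f(φ)F(φ)/φ − (q−1)| dτ ≤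
 C (∫_{ρ₁}^{ρ} e^{λτ} |f'(φ)F(φ) − q| dτ + e^{λρ₁} |f(φ(ρ₁))F(φ(ρ₁))/φ(ρ₁) − (q−1)|)`. -/
theorem weighted_integral_estimate (f F : ℝ → ℝ) (q : ℝ) (hq : 1 < q)
    (hf : ContDiffOn ℝ 2 f (Set.Ioi 0))
    (hfpos : ∀ s : ℝ, 0 < s → 0 < f s)
    (hf'pos : ∀ s : ℝ, 0 < s → 0 < deriv f s)
    (hfint : ∀ s : ℝ, 0 < s →
      MeasureTheory.IntegrableOn (fun t => (f t)⁻¹) (Set.Ioi s))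
    (hF : ∀ s : ℝ, F s = ∫ t in Set.Ioi s, (f t)⁻¹)
    (hlim : Filter.Tendsto (fun s => deriv f s * F s) Filter.atTop (nhds q))
    (ρ₀ : ℝ) (φ : ℝ → ℝ)
    (hφpos : ∀ ρ ∈ Set.Ici ρ₀, 0 < φ ρ)
    (hφderiv : ∀ ρ ∈ Set.Ici ρ₀,
      HasDerivWithinAt φ (2 * f (φ ρ) * F (φ ρ)) (Set.Ici ρ₀) ρ)
    (hφtop : Filter.Tendsto φ Filter.atTop Filter.atTop)
    (lam : ℝ) (hlam : 0 < lam) (hlam' : lam < 2 * (q - 1)) :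
    ∃ ρ₁ : ℝ, ρ₀ ≤ ρ₁ ∧ ∃ C : ℝ, 0 < C ∧ ∀ ρ ≥ ρ₁,
      (∫ τ in ρ₁..ρ, Real.exp (lam * τ) * |f (φ τ) * F (φ τ) / φ τ - (q - 1)|) ≤
        C * ((∫ τ in ρ₁..ρ, Real.exp (lam * τ) * |deriv f (φ τ) * F (φ τ) - q|) +
          Real.exp (lam * ρ₁) * |f (φ ρ₁) * F (φ ρ₁) / φ ρ₁ - (q - 1)|) := by
  have hfc : ContinuousOn f (Set.Ioi 0) := hf.continuousOn
  have hFd' : ∀ s : ℝ, 0 < s → HasDerivAt F (-(f s)⁻¹) s :=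
    fun s hs => aux_F_deriv f F hfc hfpos hfint hF hs
  have hfd : ∀ s : ℝ, 0 < s → HasDerivAt f (deriv f s) s := fun s hs =>
    ((hf.differentiableOn two_ne_zero).differentiableAt (isOpen_Ioi.mem_nhds hs)).hasDerivAt
  have hf'c : ContinuousOn (deriv f) (Set.Ioi 0) :=
    hf.continuousOn_deriv_of_isOpen isOpen_Ioi one_le_two
  have hFc : ContinuousOn F (Set.Ioi 0) :=
    fun s hs => (hFd' s hs).continuousAt.continuousWithinAt
  have hGd : ∀ s : ℝ, 0 < s → HasDerivAt (fun t => f t * F t) (deriv f s * F s - 1) s := by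
    intro s hs
    have h := (hfd s hs).mul (hFd' s hs)
    refine h.congr_deriv ?_
    rw [mul_neg, mul_inv_cancel₀ (hfpos s hs).ne']
    ring
  have hG'c : ContinuousOn (fun t => deriv f t * F t - 1) (Set.Ioi 0) :=
    (hf'c.mul hFc).sub continuousOn_const
  have hUev := aux_limit f F q hGd hG'c hlim
  -- constants
  set δ : ℝ := (2*(q-1) - lam)/4 with hδdef
  have hδ : 0 < δ := by rw [hδdef]; linarith
  set μ : ℝ := lam + 2*δ with hμdef
  set M : ℝ := 2*(q-1) + 2*δ with hMdef
  have hM : 0 < M := by rw [hMdef]; linarith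
  have hdpos : 0 < μ - lam := by rw [hμdef]; linarith
  have h4δ : 4*δ = 2*(q-1) - lam := by rw [hδdef]; ring
  -- choose ρ₁
  obtain ⟨N, hN⟩ := Filter.eventually_atTop.mp (hφtop.eventually (hUev δ hδ))
  set ρ₁ : ℝ := max N (ρ₀ + 1) with hρ₁def
  have hρ₀ρ₁ : ρ₀ < ρ₁ := lt_of_lt_of_le (lt_add_one ρ₀) (le_max_right _ _)
  refine ⟨ρ₁, hρ₀ρ₁.le, (M+1)/(μ - lam), by positivity, ?_⟩
  -- abbreviations
  set uu : ℝ → ℝ := fun t => f (φ t) * F (φ t) / φ t with huu_def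
  set er : ℝ → ℝ := fun t => deriv f (φ t) * F (φ t) - q with her_def
  set v : ℝ → ℝ := fun t => uu t - (q - 1) with hv_def
  have hφpos' : ∀ t : ℝ, ρ₀ < t → 0 < φ t := fun t ht => hφpos t ht.le
  have hφat : ∀ t : ℝ, ρ₀ < t → HasDerivAt φ (2 * f (φ t) * F (φ t)) t :=
    fun t ht => (hφderiv t ht.le).hasDerivAt (Ici_mem_nhds ht)
  have hca : ∀ t : ℝ, ρ₀ < t → ContinuousAt uu t ∧ ContinuousAt er t := by
    intro t ht
    have hφca := (hφat t ht).continuousAt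
    have hp := hφpos' t ht
    have h1 : ContinuousAt f (φ t) := hfc.continuousAt (isOpen_Ioi.mem_nhds hp)
    have h2 : ContinuousAt F (φ t) := (hFd' _ hp).continuousAt
    have h3 : ContinuousAt (deriv f) (φ t) := hf'c.continuousAt (isOpen_Ioi.mem_nhds hp)
    exact ⟨((h1.comp hφca).mul (h2.comp hφca)).div hφca hp.ne',
      ((h3.comp hφca).mul (h2.comp hφca)).sub continuousAt_const⟩
  have huuca : ∀ t : ℝ, ρ₀ < t → ContinuousAt uu t := fun t ht => (hca t ht).1
  have herca : ∀ t : ℝ, ρ₀ < t → ContinuousAt er t := fun t ht => (hca t ht).2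
  have hvca : ∀ t : ℝ, ρ₀ < t → ContinuousAt v t :=
    fun t ht => (huuca t ht).sub continuousAt_const
  have hvd : ∀ t : ℝ, ρ₀ < t → HasDerivAt v (2 * uu t * (er t - v t)) t := by
    intro t ht
    have hp := hφpos' t ht
    have h1 : HasDerivAt (fun s => f (φ s)) (deriv f (φ t) * (2 * f (φ t) * F (φ t))) t :=
      (hfd _ hp).comp t (hφat t ht)
    have h2 : HasDerivAt (fun s => F (φ s)) (-(f (φ t))⁻¹ * (2 * f (φ t) * F (φ t))) t :=
      (hFd' _ hp).comp t (hφat t ht)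
    have h3 := ((h1.mul h2).div (hφat t ht) hp.ne').sub_const (q-1)
    refine h3.congr_deriv ?_
    simp only [huu_def, her_def, hv_def]
    field_simp [hp.ne', (hfpos _ hp).ne']
    simp only [Pi.mul_apply]
    ring
  -- helpers
  have hsm : ∀ (G : ℝ → ℝ), (∀ t, ρ₀ < t → ContinuousAt G t) → ∀ t : ℝ, ρ₀ < t →
      StronglyMeasurableAtFilter G (nhds t) MeasureTheory.volume := fun G hG t ht =>
    ContinuousAt.stronglyMeasurableAtFilter isOpen_Ioi (fun x hx => hG x hx) t ht
  have hii : ∀ (G : ℝ → ℝ), (∀ t, ρ₀ < t → ContinuousAt G t) → ∀ a b : ℝ, ρ₀ < a → ρ₀ < b →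
      IntervalIntegrable G MeasureTheory.volume a b := by
    intro G hG a b ha hb
    apply ContinuousOn.intervalIntegrable
    intro x hx
    exact (hG x (lt_of_lt_of_le (lt_min ha hb) hx.1)).continuousWithinAt
  -- A
  set A : ℝ → ℝ := fun t => ∫ σ in ρ₁..t, 2 * uu σ with hA_def
  have huuca2 : ∀ t : ℝ, ρ₀ < t → ContinuousAt (fun σ => 2 * uu σ) t :=
    fun t ht => continuousAt_const.mul (huuca t ht)
  have hAd : ∀ t : ℝ, ρ₀ < t → HasDerivAt A (2 * uu t) t := fun t ht =>
    intervalIntegral.integral_hasDerivAt_right (hii _ huuca2 ρ₁ t hρ₀ρ₁ ht)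
      (hsm _ huuca2 t ht) (huuca2 t ht)
  have hAc : ∀ t : ℝ, ρ₀ < t → ContinuousAt A t := fun t ht => (hAd t ht).continuousAt
  have hAρ₁ : A ρ₁ = 0 := intervalIntegral.integral_same
  -- B
  set B : ℝ → ℝ := fun t => ∫ σ in ρ₁..t, Real.exp (A σ) * M * |er σ| with hB_def
  have hBica : ∀ t : ℝ, ρ₀ < t → ContinuousAt (fun σ => Real.exp (A σ) * M * |er σ|) t :=
    fun t ht => (((Real.continuous_exp.continuousAt).comp (hAc t ht)).mul
      continuousAt_const).mul (herca t ht).abs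
  have hBd : ∀ t : ℝ, ρ₀ < t → HasDerivAt B (Real.exp (A t) * M * |er t|) t := fun t ht =>
    intervalIntegral.integral_hasDerivAt_right (hii _ hBica ρ₁ t hρ₀ρ₁ ht)
      (hsm _ hBica t ht) (hBica t ht)
  have hBρ₁ : B ρ₁ = 0 := intervalIntegral.integral_same
  -- Q, P
  set Q : ℝ → ℝ := fun t => Real.exp (lam * t - A t) with hQ_def
  have hQpos : ∀ t : ℝ, 0 < Q t := fun t => Real.exp_pos _
  have hQE : ∀ t : ℝ, Q t * Real.exp (A t) = Real.exp (lam * t) := by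
    intro t
    simp only [hQ_def]
    rw [← Real.exp_add]
    ring_nf
  have hQρ₁ : Q ρ₁ = Real.exp (lam * ρ₁) := by
    simp only [hQ_def, hAρ₁, sub_zero]
  have hQd : ∀ t : ℝ, ρ₀ < t → HasDerivAt Q ((lam - 2 * uu t) * Q t) t := by
    intro t ht
    have h1 : HasDerivAt (fun s => lam * s - A s) (lam - 2 * uu t) t := by
      have h := ((hasDerivAt_id t).const_mul lam).sub (hAd t ht)
      simp only [mul_one] at h
      exact h
    have h2 := h1.exp
    convert h2 using 1
    ring
  have hQca : ∀ t : ℝ, ρ₀ < t → ContinuousAt Q t := fun t ht => (hQd t ht).continuousAt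
  set P : ℝ → ℝ := fun t => Q t * B t with hP_def
  have hPd : ∀ t : ℝ, ρ₀ < t →
      HasDerivAt P ((lam - 2 * uu t) * P t + Real.exp (lam * t) * M * |er t|) t := by
    intro t ht
    have h1 := (hQd t ht).mul (hBd t ht)
    refine h1.congr_deriv ?_
    simp only [hP_def]
    rw [← hQE t]
    ring
  have hPca : ∀ t : ℝ, ρ₀ < t → ContinuousAt P t := fun t ht => (hPd t ht).continuousAt
  -- bounds along the trajectory
  have hbnd : ∀ t : ℝ, ρ₁ ≤ t → μ ≤ 2 * uu t ∧ 2 * uu t ≤ M := by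
    intro t ht
    have h : |uu t - (q-1)| < δ := hN t (le_trans (le_max_left _ _) ht)
    have h' := abs_lt.mp h
    constructor
    · rw [hμdef]; simp only [huu_def] at h' ⊢; linarith
    · rw [hMdef]; simp only [huu_def] at h' ⊢; linarith
  have hμpos : 0 < μ := by rw [hμdef]; linarith
  -- main estimate
  intro ρ hρ
  have hρ₀ρ : ∀ {x : ℝ}, ρ₁ ≤ x → ρ₀ < x := fun hx => lt_of_lt_of_le hρ₀ρ₁ hx
  have hρ0 : ρ₀ < ρ := hρ₀ρ hρ
  -- step 1 : pointwise bound
  have step1 : ∀ τ ∈ Set.Icc ρ₁ ρ, Real.exp (lam * τ) * |v τ| ≤ |v ρ₁| * Q τ + P τ := by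
    intro τ hτ
    have hτ1 : ρ₁ ≤ τ := hτ.1
    have hτ0 : ρ₀ < τ := hρ₀ρ hτ1
    have hwd : ∀ σ ∈ Set.uIcc ρ₁ τ,
        HasDerivAt (fun t => Real.exp (A t) * v t) (Real.exp (A σ) * (2 * uu σ) * er σ) σ := by
      intro σ hσ
      rw [Set.uIcc_of_le hτ1] at hσ
      have hσ0 : ρ₀ < σ := hρ₀ρ hσ.1
      have h1 := ((hAd σ hσ0).exp).mul (hvd σ hσ0)
      refine h1.congr_deriv ?_
      ring
    have hwica : ∀ t : ℝ, ρ₀ < t → ContinuousAt (fun σ => Real.exp (A σ) * (2 * uu σ) * er σ) t :=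
      fun t ht => (((Real.continuous_exp.continuousAt).comp (hAc t ht)).mul
        (huuca2 t ht)).mul (herca t ht)
    have hint : IntervalIntegrable (fun σ => Real.exp (A σ) * (2 * uu σ) * er σ)
        MeasureTheory.volume ρ₁ τ := hii _ hwica ρ₁ τ hρ₀ρ₁ hτ0
    have hftc := intervalIntegral.integral_eq_sub_of_hasDerivAt hwd hint
    have h2 : Real.exp (A τ) * v τ
        = v ρ₁ + ∫ σ in ρ₁..τ, Real.exp (A σ) * (2 * uu σ) * er σ := by
      rw [hftc, hAρ₁, Real.exp_zero, one_mul]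
      ring
    have h3 : |∫ σ in ρ₁..τ, Real.exp (A σ) * (2 * uu σ) * er σ| ≤ B τ := by
      calc |∫ σ in ρ₁..τ, Real.exp (A σ) * (2 * uu σ) * er σ|
          ≤ ∫ σ in ρ₁..τ, |Real.exp (A σ) * (2 * uu σ) * er σ| :=
            intervalIntegral.abs_integral_le_integral_abs hτ1
        _ ≤ B τ := by
            apply intervalIntegral.integral_mono_on hτ1 hint.abs
              (hii _ hBica ρ₁ τ hρ₀ρ₁ hτ0)
            intro x hx
            have h2uu := hbnd x hx.1
            have h2uupos : 0 < 2 * uu x := lt_of_lt_of_le hμpos h2uu.1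
            rw [abs_mul, abs_mul, abs_of_pos (Real.exp_pos _), abs_of_pos h2uupos]
            gcongr
            exact h2uu.2
    have habs : Real.exp (A τ) * |v τ| ≤ |v ρ₁| + B τ := by
      calc Real.exp (A τ) * |v τ| = |Real.exp (A τ) * v τ| := by
            rw [abs_mul, abs_of_pos (Real.exp_pos _)]
        _ = |v ρ₁ + ∫ σ in ρ₁..τ, Real.exp (A σ) * (2 * uu σ) * er σ| := by rw [h2]
        _ ≤ |v ρ₁| + |∫ σ in ρ₁..τ, Real.exp (A σ) * (2 * uu σ) * er σ| := abs_add_le _ _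
        _ ≤ |v ρ₁| + B τ := by linarith
    have heq : Real.exp (lam * τ) * |v τ| = Q τ * (Real.exp (A τ) * |v τ|) := by
      rw [← mul_assoc, hQE]
    rw [heq]
    calc Q τ * (Real.exp (A τ) * |v τ|) ≤ Q τ * (|v ρ₁| + B τ) :=
          mul_le_mul_of_nonneg_left habs (hQpos τ).le
      _ = |v ρ₁| * Q τ + P τ := by simp only [hP_def]; ring
  -- integrabilities on [ρ₁, ρ]
  have hvint : IntervalIntegrable (fun τ => Real.exp (lam * τ) * |v τ|)
      MeasureTheory.volume ρ₁ ρ :=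
    hii _ (fun t ht => ((Real.continuous_exp.continuousAt.comp
      ((continuousAt_id.const_mul lam))).mul (hvca t ht).abs)) ρ₁ ρ hρ₀ρ₁ hρ0
  have herint : IntervalIntegrable (fun τ => Real.exp (lam * τ) * |er τ|)
      MeasureTheory.volume ρ₁ ρ :=
    hii _ (fun t ht => ((Real.continuous_exp.continuousAt.comp
      ((continuousAt_id.const_mul lam))).mul (herca t ht).abs)) ρ₁ ρ hρ₀ρ₁ hρ0
  have hQint : IntervalIntegrable Q MeasureTheory.volume ρ₁ ρ := hii _ hQca ρ₁ ρ hρ₀ρ₁ hρ0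
  have hPint : IntervalIntegrable P MeasureTheory.volume ρ₁ ρ := hii _ hPca ρ₁ ρ hρ₀ρ₁ hρ0
  set J : ℝ := ∫ τ in ρ₁..ρ, Real.exp (lam * τ) * |er τ| with hJ_def
  have hJ0 : 0 ≤ J := by
    rw [hJ_def]
    apply intervalIntegral.integral_nonneg hρ
    intro x _
    positivity
  -- I ≤ |v ρ₁| ∫Q + ∫P
  have hI_le : (∫ τ in ρ₁..ρ, Real.exp (lam * τ) * |v τ|)
      ≤ |v ρ₁| * (∫ τ in ρ₁..ρ, Q τ) + ∫ τ in ρ₁..ρ, P τ := by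
    have h := intervalIntegral.integral_mono_on hρ hvint
      ((hQint.const_mul (|v ρ₁|)).add hPint) step1
    rwa [intervalIntegral.integral_add (hQint.const_mul _) hPint,
      intervalIntegral.integral_const_mul] at h
  -- ∫Q bound
  have hQ'int : IntervalIntegrable (fun τ => (lam - 2 * uu τ) * Q τ)
      MeasureTheory.volume ρ₁ ρ :=
    hii _ (fun t ht => ((continuousAt_const.sub (huuca2 t ht)).mul (hQca t ht))) ρ₁ ρ hρ₀ρ₁ hρ0
  have hftcQ : (∫ τ in ρ₁..ρ, (lam - 2 * uu τ) * Q τ) = Q ρ - Q ρ₁ := by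
    apply intervalIntegral.integral_eq_sub_of_hasDerivAt
    · intro t ht
      rw [Set.uIcc_of_le hρ] at ht
      exact hQd t (hρ₀ρ ht.1)
    · exact hQ'int
  have hQ'nint : IntervalIntegrable (fun τ => -((lam - 2 * uu τ) * Q τ))
      MeasureTheory.volume ρ₁ ρ := hQ'int.neg
  have hQint_le : (μ - lam) * (∫ τ in ρ₁..ρ, Q τ) ≤ Real.exp (lam * ρ₁) := by
    have hmono : (∫ τ in ρ₁..ρ, (μ - lam) * Q τ) ≤ ∫ τ in ρ₁..ρ, -((lam - 2 * uu τ) * Q τ) := by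
      apply intervalIntegral.integral_mono_on hρ (hQint.const_mul _) hQ'nint
      intro x hx
      have h2uu := (hbnd x hx.1).1
      have : -((lam - 2 * uu x) * Q x) = (2 * uu x - lam) * Q x := by ring
      rw [this]
      exact mul_le_mul_of_nonneg_right (by linarith) (hQpos x).le
    rw [intervalIntegral.integral_const_mul, intervalIntegral.integral_neg, hftcQ] at hmono
    have := hQpos ρ
    rw [← hQρ₁]
    linarith
  -- ∫P bound
  have hexpMint : IntervalIntegrable (fun τ => Real.exp (lam * τ) * M * |er τ|)
      MeasureTheory.volume ρ₁ ρ :=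
    hii _ (fun t ht => (((Real.continuous_exp.continuousAt.comp
      ((continuousAt_id.const_mul lam))).mul continuousAt_const).mul (herca t ht).abs))
      ρ₁ ρ hρ₀ρ₁ hρ0
  have hP'int : IntervalIntegrable
      (fun τ => (lam - 2 * uu τ) * P τ + Real.exp (lam * τ) * M * |er τ|)
      MeasureTheory.volume ρ₁ ρ :=
    (hii _ (fun t ht => ((continuousAt_const.sub (huuca2 t ht)).mul (hPca t ht)))
      ρ₁ ρ hρ₀ρ₁ hρ0).add hexpMint
  have hftcP : (∫ τ in ρ₁..ρ, ((lam - 2 * uu τ) * P τ + Real.exp (lam * τ) * M * |er τ|))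
      = P ρ - P ρ₁ := by
    apply intervalIntegral.integral_eq_sub_of_hasDerivAt
    · intro t ht
      rw [Set.uIcc_of_le hρ] at ht
      exact hPd t (hρ₀ρ ht.1)
    · exact hP'int
  have hPρ₁ : P ρ₁ = 0 := by simp only [hP_def, hBρ₁, mul_zero]
  have hPρ : 0 ≤ P ρ := by
    have hBρ : 0 ≤ B ρ := by
      rw [hB_def]
      apply intervalIntegral.integral_nonneg hρ
      intro x _
      positivity
    exact mul_nonneg (hQpos ρ).le hBρ
  have hMJ : (∫ τ in ρ₁..ρ, Real.exp (lam * τ) * M * |er τ|) = M * J := by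
    rw [hJ_def, ← intervalIntegral.integral_const_mul]
    apply intervalIntegral.integral_congr
    intro x _
    ring
  have hP'nint : IntervalIntegrable
      (fun τ => -((lam - 2 * uu τ) * P τ + Real.exp (lam * τ) * M * |er τ|))
      MeasureTheory.volume ρ₁ ρ := hP'int.neg
  have hPnsum : IntervalIntegrable
      (fun τ => -((lam - 2 * uu τ) * P τ + Real.exp (lam * τ) * M * |er τ|)
          + Real.exp (lam * τ) * M * |er τ|)
      MeasureTheory.volume ρ₁ ρ := hP'nint.add hexpMint
  have hPint_le : (μ - lam) * (∫ τ in ρ₁..ρ, P τ) ≤ M * J := by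
    have hmono : (∫ τ in ρ₁..ρ, (μ - lam) * P τ)
        ≤ ∫ τ in ρ₁..ρ, (-((lam - 2 * uu τ) * P τ + Real.exp (lam * τ) * M * |er τ|)
            + Real.exp (lam * τ) * M * |er τ|) := by
      apply intervalIntegral.integral_mono_on hρ (hPint.const_mul _) hPnsum
      intro x hx
      have h2uu := (hbnd x hx.1).1
      have hPx : 0 ≤ P x := by
        have hBx : 0 ≤ B x := by
          rw [hB_def]
          apply intervalIntegral.integral_nonneg hx.1
          intro y _
          positivity
        exact mul_nonneg (hQpos x).le hBx
      have : -((lam - 2 * uu x) * P x + Real.exp (lam * x) * M * |er x|)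
          + Real.exp (lam * x) * M * |er x| = (2 * uu x - lam) * P x := by ring
      rw [this]
      exact mul_le_mul_of_nonneg_right (by linarith) hPx
    rw [intervalIntegral.integral_const_mul,
      intervalIntegral.integral_add hP'nint hexpMint,
      intervalIntegral.integral_neg, hftcP, hMJ] at hmono
    linarith
  -- combine
  have h6 : (μ - lam) * (∫ τ in ρ₁..ρ, Real.exp (lam * τ) * |v τ|)
      ≤ |v ρ₁| * Real.exp (lam * ρ₁) + M * J := by
    have t1 := mul_le_mul_of_nonneg_left hI_le hdpos.le
    have t2 := mul_le_mul_of_nonneg_left hQint_le (abs_nonneg (v ρ₁))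
    nlinarith [t1, t2, hPint_le]
  have hgoal : (∫ τ in ρ₁..ρ, Real.exp (lam * τ) * |v τ|)
      ≤ (M+1)/(μ - lam) * (J + Real.exp (lam * ρ₁) * |v ρ₁|) := by
    rw [div_mul_eq_mul_div, le_div_iff₀ hdpos]
    nlinarith [h6, hJ0, mul_nonneg (Real.exp_pos (lam * ρ₁)).le (abs_nonneg (v ρ₁)), hM]
  simpa only [hv_def, her_def, huu_def, hJ_def] using hgoal
end

section
/- Assume lim_{s→∞} f'(s)F(s) = q with q > 1, and let λ ∈ (0, 2(q−1)). Then there exist ρ₁ ≥ ρ₀ and C > 0 such that for all ρ ≥ ρ₁: ∫_{ρ₁}^{ρ} (1+(ρ−τ))·e^{λτ}·| f(φ(τ))F(φ(τ))/φ(τ) − (q−1) | dτ ≤ C·( ∫_{ρ₁}^{ρ} (1+(ρ−τ))·e^{λτ}·| f'(φ(τ))F(φ(τ)) − q | dτ + (1+(ρ−ρ₁))·e^{λρ₁}·| f(φ(ρ₁))F(φ(ρ₁))/φ(ρ₁) − (q−1) | ). -/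
open Set MeasureTheory intervalIntegral Filter Topology


lemma lemF (f F : ℝ → ℝ)
    (hf : ContDiffOn ℝ 2 f (Set.Ioi 0))
    (hfpos : ∀ s : ℝ, 0 < s → 0 < f s)
    (hfint : ∀ s : ℝ, 0 < s →
      MeasureTheory.IntegrableOn (fun t => (f t)⁻¹) (Set.Ioi s))
    (hF : ∀ s : ℝ, F s = ∫ t in Set.Ioi s, (f t)⁻¹) :
    ∀ s : ℝ, 0 < s → HasDerivAt F (-(f s)⁻¹) s := by
  intro s hs
  have hcont : ContinuousOn (fun t => (f t)⁻¹) (Set.Ioi 0) :=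
    hf.continuousOn.inv₀ fun t ht => (hfpos t ht).ne'
  have hsplit : ∀ a b : ℝ, 0 < a → a ≤ b →
      F a = (∫ t in a..b, (f t)⁻¹) + F b := by
    intro a b ha hab
    have hu : Set.Ioc a b ∪ Set.Ioi b = Set.Ioi a := Set.Ioc_union_Ioi_eq_Ioi hab
    have hdisj : Disjoint (Set.Ioc a b) (Set.Ioi b) := Set.Ioc_disjoint_Ioi le_rfl
    have hi1 : IntegrableOn (fun t => (f t)⁻¹) (Set.Ioc a b) :=
      (hfint a ha).mono_set Set.Ioc_subset_Ioi_self
    have hi2 : IntegrableOn (fun t => (f t)⁻¹) (Set.Ioi b) :=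
      hfint b (lt_of_lt_of_le ha hab)
    rw [hF a, hF b, ← hu, MeasureTheory.setIntegral_union hdisj measurableSet_Ioi hi1 hi2,
      intervalIntegral.integral_of_le hab]
  have key : Set.EqOn F (fun x => F s - ∫ t in s..x, (f t)⁻¹) (Set.Ioi 0) := by
    intro x hx
    rcases le_total s x with hsx | hxs
    · have := hsplit s x hs hsx
      simp only
      linarith
    · have := hsplit x s hx hxs
      simp only
      rw [intervalIntegral.integral_symm]
      linarith
  have hmeas : StronglyMeasurableAtFilter (fun t => (f t)⁻¹) (𝓝 s) :=
    AEStronglyMeasurable.stronglyMeasurableAtFilter_of_mem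
      (hcont.aestronglyMeasurable measurableSet_Ioi) (Ioi_mem_nhds hs)
  have hint : IntervalIntegrable (fun t => (f t)⁻¹) volume s s :=
    IntervalIntegrable.refl
  have hd := intervalIntegral.integral_hasDerivAt_right hint hmeas
    (hcont.continuousAt (Ioi_mem_nhds hs))
  have hd2 : HasDerivAt (fun x => F s - ∫ t in s..x, (f t)⁻¹) (-(f s)⁻¹) s :=
    hd.const_sub (F s)
  exact hd2.congr_of_eventuallyEq (Filter.eventuallyEq_of_mem (Ioi_mem_nhds hs) key)


lemma lemCesaro (G δ : ℝ → ℝ) (L : ℝ)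
    (hGd : ∀ s : ℝ, 0 < s → HasDerivAt G (δ s) s)
    (hδc : ContinuousOn δ (Set.Ioi 0))
    (hδlim : Filter.Tendsto δ Filter.atTop (nhds L)) :
    Filter.Tendsto (fun s => G s / s) Filter.atTop (nhds L) := by
  rw [Metric.tendsto_atTop] at hδlim ⊢
  intro ε hε
  obtain ⟨N, hN⟩ := hδlim (ε / 2) (by linarith)
  set s₂ := max N 1 with hs₂
  have hs₂1 : (1:ℝ) ≤ s₂ := le_max_right _ _
  have hs₂0 : (0:ℝ) < s₂ := lt_of_lt_of_le one_pos hs₂1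
  have hδb : ∀ t : ℝ, s₂ ≤ t → |δ t - L| ≤ ε / 2 := by
    intro t ht
    have := hN t (le_trans (le_max_left _ _) ht)
    rw [Real.dist_eq] at this
    linarith
  set K := |G s₂ - L * s₂| with hK
  have hK0 : 0 ≤ K := abs_nonneg _
  refine ⟨max s₂ (2 * K / ε + 1), fun s hsge => ?_⟩
  have hss₂ : s₂ ≤ s := le_trans (le_max_left _ _) hsge
  have hs0 : 0 < s := lt_of_lt_of_le hs₂0 hss₂
  have hsK : 2 * K / ε + 1 ≤ s := le_trans (le_max_right _ _) hsge
  -- FTC from s₂ to s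
  have hsub : Set.uIcc s₂ s ⊆ Set.Ioi 0 := by
    rw [Set.uIcc_of_le hss₂]
    intro t ht
    exact lt_of_lt_of_le hs₂0 ht.1
  have hInt : IntervalIntegrable δ MeasureTheory.volume s₂ s :=
    (hδc.mono hsub).intervalIntegrable
  have hFTC : ∫ t in s₂..s, δ t = G s - G s₂ := by
    refine intervalIntegral.integral_eq_sub_of_hasDerivAt (fun t ht => ?_) hInt
    exact hGd t (hsub ht)
  have hIntc : IntervalIntegrable (fun _ : ℝ => L) MeasureTheory.volume s₂ s :=
    intervalIntegrable_const
  have hbound : |G s - G s₂ - L * (s - s₂)| ≤ ε / 2 * (s - s₂) := by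
    have h1 : G s - G s₂ - L * (s - s₂) = ∫ t in s₂..s, (δ t - L) := by
      rw [intervalIntegral.integral_sub hInt hIntc, hFTC, intervalIntegral.integral_const]
      simp [smul_eq_mul]
      ring
    rw [h1]
    have h2 := intervalIntegral.norm_integral_le_of_norm_le_const
      (C := ε / 2) (f := fun t => δ t - L) (a := s₂) (b := s) ?_
    · rw [Real.norm_eq_abs] at h2
      calc |∫ t in s₂..s, (δ t - L)| ≤ ε / 2 * |s - s₂| := h2
        _ = ε / 2 * (s - s₂) := by rw [abs_of_nonneg (by linarith)]
    · intro x hx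
      rw [Set.uIoc_of_le hss₂] at hx
      exact (Real.norm_eq_abs _) ▸ hδb x (le_of_lt hx.1)
  have hKs : K / s < ε / 2 := by
    rw [div_lt_iff₀ hs0]
    have he : ε * (2 * K / ε) = 2 * K := by field_simp
    nlinarith [mul_le_mul_of_nonneg_left hsK (le_of_lt hε)]
  have htri : |G s - L * s| ≤ K + ε / 2 * (s - s₂) := by
    have : G s - L * s = (G s₂ - L * s₂) + (G s - G s₂ - L * (s - s₂)) := by ring
    rw [this]
    exact le_trans (abs_add_le _ _) (by linarith [hbound])
  rw [Real.dist_eq]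
  have heq : G s / s - L = (G s - L * s) / s := by field_simp
  rw [heq, abs_div, abs_of_pos hs0]
  rw [div_lt_iff₀ hs0]
  calc |G s - L * s| ≤ K + ε / 2 * (s - s₂) := htri
    _ < ε * s := by nlinarith [hKs, (div_lt_iff₀ hs0).mp hKs]


lemma core (g E H : ℝ → ℝ) (ρ₁ ρ μ lam Mq : ℝ) (hρ : ρ₁ ≤ ρ)
    (hlam : 0 < lam) (hml : lam < μ) (hMq : 0 ≤ Mq)
    (hgc : ContinuousOn g (Set.Ici ρ₁))
    (hEc : ContinuousOn E (Set.Ici ρ₁))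
    (hHc : ContinuousOn H (Set.Ici ρ₁))
    (hglb : ∀ t, ρ₁ ≤ t → μ ≤ 2 * g t)
    (hgub : ∀ t, ρ₁ ≤ t → 2 * g t ≤ Mq)
    (hHd : ∀ t, ρ₁ < t → HasDerivAt H (2 * g t * (E t - H t)) t) :
    (∫ τ in ρ₁..ρ, (1 + (ρ - τ)) * Real.exp (lam * τ) * |H τ|) ≤
      (Mq + 1) / (μ - lam) *
        ((∫ τ in ρ₁..ρ, (1 + (ρ - τ)) * Real.exp (lam * τ) * |E τ|) +
          (1 + (ρ - ρ₁)) * Real.exp (lam * ρ₁) * |H ρ₁|) := by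
  have hIcc : ∀ a b : ℝ, ρ₁ ≤ a → a ≤ b → Set.uIcc a b ⊆ Set.Ici ρ₁ := by
    intro a b ha hab
    rw [Set.uIcc_of_le hab]; exact fun t ht => le_trans ha ht.1
  have hg2c : ContinuousOn (fun t => 2 * g t) (Set.Ici ρ₁) := continuousOn_const.mul hgc
  set G₂ : ℝ → ℝ := fun τ => ∫ t in ρ₁..τ, 2 * g t with hG₂def
  have hG₂cont : ContinuousOn G₂ (Set.Icc ρ₁ ρ) := by
    have := intervalIntegral.continuousOn_primitive_interval
      (f := fun t => 2 * g t) (a := ρ₁) (b := ρ) (μ := volume)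
      ((hg2c.mono (hIcc ρ₁ ρ le_rfl hρ)).integrableOn_compact isCompact_uIcc)
    rwa [Set.uIcc_of_le hρ] at this
  have hG₂d : ∀ t, ρ₁ < t → HasDerivAt G₂ (2 * g t) t := by
    intro t ht
    have hi : IntervalIntegrable (fun u => 2 * g u) volume ρ₁ t :=
      (hg2c.mono (hIcc ρ₁ t le_rfl ht.le)).intervalIntegrable
    have hmeas : StronglyMeasurableAtFilter (fun u => 2 * g u) (𝓝 t) :=
      AEStronglyMeasurable.stronglyMeasurableAtFilter_of_mem
        (hg2c.aestronglyMeasurable measurableSet_Ici) (Ici_mem_nhds ht)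
    exact intervalIntegral.integral_hasDerivAt_right hi hmeas
      (hg2c.continuousAt (Ici_mem_nhds ht))
  have hG₂mono : ∀ s τ : ℝ, ρ₁ ≤ s → s ≤ τ → μ * (τ - s) ≤ G₂ τ - G₂ s := by
    intro s τ hs hsτ
    have hi1 : IntervalIntegrable (fun u => 2 * g u) volume ρ₁ s :=
      (hg2c.mono (hIcc ρ₁ s le_rfl hs)).intervalIntegrable
    have hi2 : IntervalIntegrable (fun u => 2 * g u) volume s τ :=
      (hg2c.mono (hIcc s τ hs hsτ)).intervalIntegrable
    have hadd : G₂ s + (∫ t in s..τ, 2 * g t) = G₂ τ :=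
      intervalIntegral.integral_add_adjacent_intervals hi1 hi2
    have hmono : (∫ _ in s..τ, μ) ≤ ∫ t in s..τ, 2 * g t :=
      intervalIntegral.integral_mono_on hsτ intervalIntegrable_const hi2
        (fun x hx => hglb x (le_trans hs hx.1))
    rw [intervalIntegral.integral_const, smul_eq_mul] at hmono
    nlinarith
  have hG₂0 : G₂ ρ₁ = 0 := intervalIntegral.integral_same
  have hμ0 : 0 < μ := lt_trans hlam hml
  -- the identity from variation of constants
  have hPid : ∀ τ ∈ Set.Icc ρ₁ ρ,
      Real.exp (G₂ τ) * H τ - H ρ₁ = ∫ s in ρ₁..τ, Real.exp (G₂ s) * (2 * g s) * E s := by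
    intro τ hτ
    have hsubI : Set.Icc ρ₁ τ ⊆ Set.Ici ρ₁ := fun t ht => ht.1
    have hsubI2 : Set.Icc ρ₁ τ ⊆ Set.Icc ρ₁ ρ := Set.Icc_subset_Icc le_rfl hτ.2
    have hcont : ContinuousOn (fun t => Real.exp (G₂ t) * H t) (Set.Icc ρ₁ τ) :=
      ((Real.continuous_exp.comp_continuousOn (hG₂cont.mono hsubI2)).mul (hHc.mono hsubI))
    have hderiv : ∀ x ∈ Set.Ioo ρ₁ τ, HasDerivWithinAt (fun t => Real.exp (G₂ t) * H t)
        (Real.exp (G₂ x) * (2 * g x) * E x) (Set.Ioi x) x := by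
      intro x hx
      have hd := ((hG₂d x hx.1).exp.mul (hHd x hx.1))
      have heq : Real.exp (G₂ x) * (2 * g x) * H x + Real.exp (G₂ x) * (2 * g x * (E x - H x))
          = Real.exp (G₂ x) * (2 * g x) * E x := by ring
      rw [heq] at hd
      exact hd.hasDerivWithinAt
    have hint : IntervalIntegrable (fun s => Real.exp (G₂ s) * (2 * g s) * E s) volume ρ₁ τ := by
      apply ContinuousOn.intervalIntegrable
      rw [Set.uIcc_of_le hτ.1]
      exact ((Real.continuous_exp.comp_continuousOn (hG₂cont.mono hsubI2)).mul
        (hg2c.mono hsubI)).mul (hEc.mono hsubI)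
    have hout := intervalIntegral.integral_eq_sub_of_hasDeriv_right_of_le hτ.1 hcont hderiv hint
    rw [hout, hG₂0, Real.exp_zero, one_mul]
  -- the comparison function B
  set W : ℝ → ℝ := fun τ => |H ρ₁| + ∫ s in ρ₁..τ, Real.exp (μ * (s - ρ₁)) * (Mq * |E s|)
    with hWdef
  set B : ℝ → ℝ := fun τ => Real.exp (-μ * (τ - ρ₁)) * W τ with hBdef
  have hEabs : ContinuousOn (fun s => Real.exp (μ * (s - ρ₁)) * (Mq * |E s|)) (Set.Ici ρ₁) :=
    ((Real.continuous_exp.comp (continuous_const.mul (continuous_id.sub continuous_const) : Continuous fun s : ℝ => μ * (s - ρ₁))).continuousOn).mul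
      (continuousOn_const.mul hEc.abs)
  -- KEY pointwise bound
  have hKey : ∀ τ ∈ Set.Icc ρ₁ ρ, |H τ| ≤ B τ := by
    intro τ hτ
    have hsubI : Set.Icc ρ₁ τ ⊆ Set.Ici ρ₁ := fun t ht => ht.1
    have hsubI2 : Set.Icc ρ₁ τ ⊆ Set.Icc ρ₁ ρ := Set.Icc_subset_Icc le_rfl hτ.2
    have hint1 : IntervalIntegrable (fun s => Real.exp (G₂ s) * (2 * g s) * |E s|) volume ρ₁ τ := by
      apply ContinuousOn.intervalIntegrable
      rw [Set.uIcc_of_le hτ.1]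
      exact ((Real.continuous_exp.comp_continuousOn (hG₂cont.mono hsubI2)).mul
        (hg2c.mono hsubI)).mul (hEc.abs.mono hsubI)
    have hint2 : IntervalIntegrable
        (fun s => Real.exp (-G₂ τ) * (Real.exp (G₂ s) * (2 * g s) * |E s|)) volume ρ₁ τ :=
      hint1.const_mul _
    have hint3 : IntervalIntegrable
        (fun s => Real.exp (-μ * (τ - ρ₁)) * (Real.exp (μ * (s - ρ₁)) * (Mq * |E s|)))
        volume ρ₁ τ := by
      apply IntervalIntegrable.const_mul
      apply ContinuousOn.intervalIntegrable
      rw [Set.uIcc_of_le hτ.1]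
      exact hEabs.mono hsubI
    have hint0 : IntervalIntegrable (fun s => Real.exp (G₂ s) * (2 * g s) * E s) volume ρ₁ τ := by
      apply ContinuousOn.intervalIntegrable
      rw [Set.uIcc_of_le hτ.1]
      exact ((Real.continuous_exp.comp_continuousOn (hG₂cont.mono hsubI2)).mul
        (hg2c.mono hsubI)).mul (hEc.mono hsubI)
    have h1 : |Real.exp (G₂ τ) * H τ| ≤ |H ρ₁| +
        ∫ s in ρ₁..τ, Real.exp (G₂ s) * (2 * g s) * |E s| := by
      have heq : Real.exp (G₂ τ) * H τ
          = H ρ₁ + ∫ s in ρ₁..τ, Real.exp (G₂ s) * (2 * g s) * E s := by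
        have := hPid τ hτ; linarith
      rw [heq]
      refine le_trans (abs_add_le _ _) (add_le_add le_rfl ?_)
      refine le_trans (intervalIntegral.abs_integral_le_integral_abs hτ.1) (le_of_eq ?_)
      apply intervalIntegral.integral_congr
      intro s hs
      rw [Set.uIcc_of_le hτ.1] at hs
      have h2g0 : 0 ≤ 2 * g s := le_trans hμ0.le (hglb s hs.1)
      simp only [abs_mul, abs_of_pos (Real.exp_pos _), abs_of_nonneg h2g0]
    have hEτ : Real.exp (-G₂ τ) * |Real.exp (G₂ τ) * H τ| = |H τ| := by
      rw [abs_mul, abs_of_pos (Real.exp_pos _), ← mul_assoc, ← Real.exp_add,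
        neg_add_cancel, Real.exp_zero, one_mul]
    have h2 : |H τ| ≤ Real.exp (-G₂ τ) * (|H ρ₁| +
        ∫ s in ρ₁..τ, Real.exp (G₂ s) * (2 * g s) * |E s|) := by
      rw [← hEτ]
      exact mul_le_mul_of_nonneg_left h1 (Real.exp_pos _).le
    rw [mul_add, ← intervalIntegral.integral_const_mul] at h2
    have h4 : (∫ s in ρ₁..τ, Real.exp (-G₂ τ) * (Real.exp (G₂ s) * (2 * g s) * |E s|)) ≤
        ∫ s in ρ₁..τ, Real.exp (-μ * (τ - ρ₁)) * (Real.exp (μ * (s - ρ₁)) * (Mq * |E s|)) := by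
      apply intervalIntegral.integral_mono_on hτ.1 hint2 hint3
      intro s hs
      have hexp : Real.exp (-G₂ τ) * Real.exp (G₂ s) ≤
          Real.exp (-μ * (τ - ρ₁)) * Real.exp (μ * (s - ρ₁)) := by
        rw [← Real.exp_add, ← Real.exp_add]
        apply Real.exp_le_exp.mpr
        have := hG₂mono s τ hs.1 hs.2
        nlinarith
      have h2g0 : 0 ≤ 2 * g s := le_trans hμ0.le (hglb s hs.1)
      calc Real.exp (-G₂ τ) * (Real.exp (G₂ s) * (2 * g s) * |E s|)
          = (Real.exp (-G₂ τ) * Real.exp (G₂ s)) * ((2 * g s) * |E s|) := by ring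
        _ ≤ (Real.exp (-μ * (τ - ρ₁)) * Real.exp (μ * (s - ρ₁))) * (Mq * |E s|) := by
            exact mul_le_mul hexp
              (mul_le_mul_of_nonneg_right (hgub s hs.1) (abs_nonneg _))
              (mul_nonneg h2g0 (abs_nonneg _))
              (mul_nonneg (Real.exp_pos _).le (Real.exp_pos _).le)
        _ = Real.exp (-μ * (τ - ρ₁)) * (Real.exp (μ * (s - ρ₁)) * (Mq * |E s|)) := by ring
    have h5 : Real.exp (-G₂ τ) * |H ρ₁| ≤ Real.exp (-μ * (τ - ρ₁)) * |H ρ₁| := by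
      apply mul_le_mul_of_nonneg_right _ (abs_nonneg _)
      apply Real.exp_le_exp.mpr
      have := hG₂mono ρ₁ τ le_rfl hτ.1
      rw [hG₂0] at this
      nlinarith
    have h6 : (∫ s in ρ₁..τ, Real.exp (-μ * (τ - ρ₁)) * (Real.exp (μ * (s - ρ₁)) * (Mq * |E s|)))
        = Real.exp (-μ * (τ - ρ₁)) * ∫ s in ρ₁..τ, Real.exp (μ * (s - ρ₁)) * (Mq * |E s|) :=
      intervalIntegral.integral_const_mul _ _
    have hBτ : B τ = Real.exp (-μ * (τ - ρ₁)) * |H ρ₁| +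
        Real.exp (-μ * (τ - ρ₁)) * ∫ s in ρ₁..τ, Real.exp (μ * (s - ρ₁)) * (Mq * |E s|) := by
      rw [hBdef]; simp only [hWdef]; ring
    rw [hBτ]
    calc |H τ| ≤ Real.exp (-G₂ τ) * |H ρ₁| +
          ∫ s in ρ₁..τ, Real.exp (-G₂ τ) * (Real.exp (G₂ s) * (2 * g s) * |E s|) := h2
      _ ≤ Real.exp (-μ * (τ - ρ₁)) * |H ρ₁| +
          ∫ s in ρ₁..τ, Real.exp (-μ * (τ - ρ₁)) * (Real.exp (μ * (s - ρ₁)) * (Mq * |E s|)) :=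
          add_le_add h5 h4
      _ = _ := by rw [h6]
  -- properties of B
  have hWcont : ContinuousOn W (Set.Icc ρ₁ ρ) := by
    apply ContinuousOn.add continuousOn_const
    have := intervalIntegral.continuousOn_primitive_interval
      (f := fun s => Real.exp (μ * (s - ρ₁)) * (Mq * |E s|)) (a := ρ₁) (b := ρ) (μ := volume)
      ((hEabs.mono (hIcc ρ₁ ρ le_rfl hρ)).integrableOn_compact isCompact_uIcc)
    rwa [Set.uIcc_of_le hρ] at this
  have hBcont : ContinuousOn B (Set.Icc ρ₁ ρ) :=
    ((Real.continuous_exp.comp (continuous_const.mul (continuous_id.sub continuous_const) : Continuous fun s : ℝ => -μ * (s - ρ₁))).continuousOn).mul hWcont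
  have hB0 : ∀ τ ∈ Set.Icc ρ₁ ρ, 0 ≤ B τ := by
    intro τ hτ
    apply mul_nonneg (Real.exp_pos _).le
    apply add_nonneg (abs_nonneg _)
    exact intervalIntegral.integral_nonneg hτ.1
      (fun s _ => mul_nonneg (Real.exp_pos _).le (mul_nonneg hMq (abs_nonneg _)))
  have hBρ₁ : B ρ₁ = |H ρ₁| := by
    simp [hBdef, hWdef]
  have hBd : ∀ t ∈ Set.Ioo ρ₁ ρ, HasDerivAt B (-μ * B t + Mq * |E t|) t := by
    intro t ht
    have hi : IntervalIntegrable (fun s => Real.exp (μ * (s - ρ₁)) * (Mq * |E s|)) volume ρ₁ t :=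
      (hEabs.mono (hIcc ρ₁ t le_rfl ht.1.le)).intervalIntegrable
    have hmeas : StronglyMeasurableAtFilter
        (fun s => Real.exp (μ * (s - ρ₁)) * (Mq * |E s|)) (𝓝 t) :=
      AEStronglyMeasurable.stronglyMeasurableAtFilter_of_mem
        (hEabs.aestronglyMeasurable measurableSet_Ici) (Ici_mem_nhds ht.1)
    have hWd : HasDerivAt W (Real.exp (μ * (t - ρ₁)) * (Mq * |E t|)) t :=
      (intervalIntegral.integral_hasDerivAt_right hi hmeas
        (hEabs.continuousAt (Ici_mem_nhds ht.1))).const_add _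
    have hexp : HasDerivAt (fun τ => Real.exp (-μ * (τ - ρ₁)))
        (Real.exp (-μ * (t - ρ₁)) * (-μ)) t := by
      have h0 : HasDerivAt (fun τ : ℝ => -μ * (τ - ρ₁)) (-μ) t := by
        simpa using ((hasDerivAt_id t).sub_const ρ₁).const_mul (-μ)
      exact h0.exp
    have hd := hexp.mul hWd
    have hee : Real.exp (-μ * (t - ρ₁)) * Real.exp (μ * (t - ρ₁)) = 1 := by
      rw [← Real.exp_add]; ring_nf; exact Real.exp_zero
    have heq : Real.exp (-μ * (t - ρ₁)) * (-μ) * W t +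
        Real.exp (-μ * (t - ρ₁)) * (Real.exp (μ * (t - ρ₁)) * (Mq * |E t|))
        = -μ * B t + Mq * |E t| := by
      have hBt : B t = Real.exp (-μ * (t - ρ₁)) * W t := rfl
      rw [hBt]
      linear_combination (Mq * |E t|) * hee
    rw [heq] at hd
    exact hd
  -- the weight and integration by parts
  set u : ℝ → ℝ := fun τ => (1 + (ρ - τ)) * Real.exp (lam * τ) with hudef
  set D : ℝ → ℝ := fun τ => (lam * (1 + (ρ - τ)) - 1) * Real.exp (lam * τ) with hDdef
  have hucont : Continuous u := by
    apply Continuous.mul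
    · exact continuous_const.add (continuous_const.sub continuous_id)
    · exact Real.continuous_exp.comp (continuous_const.mul continuous_id)
  have hDcont : Continuous D := by
    apply Continuous.mul
    · exact (continuous_const.mul (continuous_const.add
        (continuous_const.sub continuous_id))).sub continuous_const
    · exact Real.continuous_exp.comp (continuous_const.mul continuous_id)
  have hud : ∀ t : ℝ, HasDerivAt u (D t) t := by
    intro t
    have h1 : HasDerivAt (fun τ : ℝ => 1 + (ρ - τ)) (-1) t := by
      simpa using (hasDerivAt_const t ρ).sub (hasDerivAt_id t) |>.const_add 1
    have h2 : HasDerivAt (fun τ : ℝ => Real.exp (lam * τ)) (Real.exp (lam * t) * lam) t := by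
      have : HasDerivAt (fun τ : ℝ => lam * τ) lam t := by
        simpa using (hasDerivAt_id t).const_mul lam
      exact this.exp
    have := h1.mul h2
    refine this.congr_deriv ?_
    simp only [hDdef]
    ring
  have hu0 : ∀ t ∈ Set.Icc ρ₁ ρ, 0 ≤ u t := by
    intro t ht
    apply mul_nonneg _ (Real.exp_pos _).le
    nlinarith [ht.2]
  -- FTC for u * B
  have hEcont' : ContinuousOn (fun t => |E t|) (Set.Icc ρ₁ ρ) :=
    hEc.abs.mono (fun t ht => ht.1)
  have hintDB : IntervalIntegrable (fun t => D t * B t) volume ρ₁ ρ := by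
    apply ContinuousOn.intervalIntegrable
    rw [Set.uIcc_of_le hρ]
    exact (hDcont.continuousOn).mul hBcont
  have hintuB : IntervalIntegrable (fun t => u t * B t) volume ρ₁ ρ := by
    apply ContinuousOn.intervalIntegrable
    rw [Set.uIcc_of_le hρ]
    exact (hucont.continuousOn).mul hBcont
  have hintuE : IntervalIntegrable (fun t => u t * |E t|) volume ρ₁ ρ := by
    apply ContinuousOn.intervalIntegrable
    rw [Set.uIcc_of_le hρ]
    exact (hucont.continuousOn).mul hEcont'
  have hintuH : IntervalIntegrable (fun t => u t * |H t|) volume ρ₁ ρ := by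
    apply ContinuousOn.intervalIntegrable
    rw [Set.uIcc_of_le hρ]
    exact (hucont.continuousOn).mul (hHc.abs.mono (fun t ht => ht.1))
  have hintE2 : IntervalIntegrable (fun t => u t * (Mq * |E t|)) volume ρ₁ ρ := by
    apply ContinuousOn.intervalIntegrable
    rw [Set.uIcc_of_le hρ]
    exact (hucont.continuousOn).mul (continuousOn_const.mul hEcont')
  have hintFull : IntervalIntegrable
      (fun t => D t * B t + u t * (-μ * B t + Mq * |E t|)) volume ρ₁ ρ := by
    apply ContinuousOn.intervalIntegrable
    rw [Set.uIcc_of_le hρ]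
    exact (hDcont.continuousOn.mul hBcont).add
      ((hucont.continuousOn).mul ((continuousOn_const.mul hBcont).add
        (continuousOn_const.mul hEcont')))
  have hFTC2 : (∫ t in ρ₁..ρ, (D t * B t + u t * (-μ * B t + Mq * |E t|)))
      = u ρ * B ρ - u ρ₁ * B ρ₁ := by
    apply intervalIntegral.integral_eq_sub_of_hasDeriv_right_of_le hρ
      ((hucont.continuousOn).mul hBcont)
      (fun x hx => ((hud x).mul (hBd x hx)).hasDerivWithinAt)
      hintFull
  -- rearrangement
  have hre : (∫ t in ρ₁..ρ, (μ * u t - D t) * B t)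
      = Mq * (∫ t in ρ₁..ρ, u t * |E t|) + u ρ₁ * B ρ₁ - u ρ * B ρ := by
    have h1 : (∫ t in ρ₁..ρ, (μ * u t - D t) * B t)
        = ∫ t in ρ₁..ρ, (u t * (Mq * |E t|)
            - (D t * B t + u t * (-μ * B t + Mq * |E t|))) := by
      apply intervalIntegral.integral_congr
      intro t _
      ring
    rw [h1, intervalIntegral.integral_sub hintE2 hintFull, hFTC2]
    have h2 : (∫ t in ρ₁..ρ, u t * (Mq * |E t|))
        = Mq * ∫ t in ρ₁..ρ, u t * |E t| := by
      rw [← intervalIntegral.integral_const_mul]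
      apply intervalIntegral.integral_congr
      intro t _
      ring
    rw [h2]
    ring
  -- chain of inequalities
  have hintmuD : IntervalIntegrable (fun t => (μ * u t - D t) * B t) volume ρ₁ ρ := by
    apply ContinuousOn.intervalIntegrable
    rw [Set.uIcc_of_le hρ]
    exact (((continuous_const.mul hucont).sub hDcont).continuousOn).mul hBcont
  have hm1 : (∫ t in ρ₁..ρ, u t * |H t|) ≤ ∫ t in ρ₁..ρ, u t * B t := by
    apply intervalIntegral.integral_mono_on hρ hintuH hintuB
    intro t ht
    exact mul_le_mul_of_nonneg_left (hKey t ht) (hu0 t ht)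
  have hm2 : (μ - lam) * (∫ t in ρ₁..ρ, u t * B t) ≤ ∫ t in ρ₁..ρ, (μ * u t - D t) * B t := by
    rw [← intervalIntegral.integral_const_mul]
    apply intervalIntegral.integral_mono_on hρ (hintuB.const_mul _) hintmuD
    intro t ht
    have hkey : (μ * u t - D t) * B t - (μ - lam) * (u t * B t)
        = Real.exp (lam * t) * B t := by
      simp only [hudef, hDdef]
      ring
    nlinarith [mul_nonneg (Real.exp_pos (lam * t)).le (hB0 t ht)]
  have hm3 : (∫ t in ρ₁..ρ, (μ * u t - D t) * B t)
      ≤ Mq * (∫ t in ρ₁..ρ, u t * |E t|) + u ρ₁ * |H ρ₁| := by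
    rw [hre, hBρ₁]
    have : 0 ≤ u ρ * B ρ := mul_nonneg (hu0 ρ ⟨hρ, le_rfl⟩) (hB0 ρ ⟨hρ, le_rfl⟩)
    linarith
  have hX0 : 0 ≤ ∫ t in ρ₁..ρ, u t * |E t| :=
    intervalIntegral.integral_nonneg hρ (fun t ht => mul_nonneg (hu0 t ht) (abs_nonneg _))
  have hY0 : 0 ≤ u ρ₁ * |H ρ₁| := mul_nonneg (hu0 ρ₁ ⟨le_rfl, hρ⟩) (abs_nonneg _)
  have hc : 0 < μ - lam := by linarith
  -- final assembly
  show (∫ τ in ρ₁..ρ, u τ * |H τ|) ≤ (Mq + 1) / (μ - lam) *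
      ((∫ τ in ρ₁..ρ, u τ * |E τ|) + u ρ₁ * |H ρ₁|)
  rw [div_mul_eq_mul_div, le_div_iff₀ hc]
  nlinarith [hm1, hm2, hm3, hX0, hY0]

/-- as Statement 13 but with the extra weight `1+(ρ−τ)`:
there exist `ρ₁ ≥ ρ₀` and `C > 0` such that for all `ρ ≥ ρ₁`,
`∫_{ρ₁}^{ρ} (1+(ρ−τ)) e^{λτ} |f(φ)F(φ)/φ − (q−1)| dτ ≤
 C (∫_{ρ₁}^{ρ} (1+(ρ−τ)) e^{λτ} |f'(φ)F(φ) − q| dτ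
   + (1+(ρ−ρ₁)) e^{λρ₁} |f(φ(ρ₁))F(φ(ρ₁))/φ(ρ₁) − (q−1)|)`. -/
theorem weighted_integral_estimate' (f F : ℝ → ℝ) (q : ℝ) (hq : 1 < q)
    (hf : ContDiffOn ℝ 2 f (Set.Ioi 0))
    (hfpos : ∀ s : ℝ, 0 < s → 0 < f s)
    (hf'pos : ∀ s : ℝ, 0 < s → 0 < deriv f s)
    (hfint : ∀ s : ℝ, 0 < s →
      MeasureTheory.IntegrableOn (fun t => (f t)⁻¹) (Set.Ioi s))
    (hF : ∀ s : ℝ, F s = ∫ t in Set.Ioi s, (f t)⁻¹)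
    (hlim : Filter.Tendsto (fun s => deriv f s * F s) Filter.atTop (nhds q))
    (ρ₀ : ℝ) (φ : ℝ → ℝ)
    (hφpos : ∀ ρ ∈ Set.Ici ρ₀, 0 < φ ρ)
    (hφderiv : ∀ ρ ∈ Set.Ici ρ₀,
      HasDerivWithinAt φ (2 * f (φ ρ) * F (φ ρ)) (Set.Ici ρ₀) ρ)
    (hφtop : Filter.Tendsto φ Filter.atTop Filter.atTop)
    (lam : ℝ) (hlam : 0 < lam) (hlam' : lam < 2 * (q - 1)) :
    ∃ ρ₁ : ℝ, ρ₀ ≤ ρ₁ ∧ ∃ C : ℝ, 0 < C ∧ ∀ ρ ≥ ρ₁,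
      (∫ τ in ρ₁..ρ, (1 + (ρ - τ)) * Real.exp (lam * τ) *
          |f (φ τ) * F (φ τ) / φ τ - (q - 1)|) ≤
        C * ((∫ τ in ρ₁..ρ, (1 + (ρ - τ)) * Real.exp (lam * τ) *
            |deriv f (φ τ) * F (φ τ) - q|) +
          (1 + (ρ - ρ₁)) * Real.exp (lam * ρ₁) *
            |f (φ ρ₁) * F (φ ρ₁) / φ ρ₁ - (q - 1)|) := by
  have hFd : ∀ s : ℝ, 0 < s → HasDerivAt F (-(f s)⁻¹) s := lemF f F hf hfpos hfint hF
  have hFcont : ContinuousOn F (Set.Ioi 0) :=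
    fun s hs => (hFd s hs).continuousAt.continuousWithinAt
  have hfd : ∀ s : ℝ, 0 < s → HasDerivAt f (deriv f s) s := by
    intro s hs
    exact ((hf.differentiableOn (by norm_num)).differentiableAt (Ioi_mem_nhds hs)).hasDerivAt
  have hf'c : ContinuousOn (deriv f) (Set.Ioi 0) :=
    hf.continuousOn_deriv_of_isOpen isOpen_Ioi (by norm_num)
  have hGd : ∀ s : ℝ, 0 < s → HasDerivAt (fun s => f s * F s) (deriv f s * F s - 1) s := by
    intro s hs
    have hd := (hfd s hs).mul (hFd s hs)
    have : deriv f s * F s + f s * -(f s)⁻¹ = deriv f s * F s - 1 := by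
      field_simp [(hfpos s hs).ne']
      ring
    rwa [this] at hd
  have hδc : ContinuousOn (fun s => deriv f s * F s - 1) (Set.Ioi 0) :=
    (hf'c.mul hFcont).sub continuousOn_const
  have hδlim : Filter.Tendsto (fun s => deriv f s * F s - 1) Filter.atTop (nhds (q - 1)) := by
    simpa using hlim.sub_const 1
  have hgq : Filter.Tendsto (fun s => f s * F s / s) Filter.atTop (nhds (q - 1)) :=
    lemCesaro (fun s => f s * F s) (fun s => deriv f s * F s - 1) (q - 1) hGd hδc hδlim
  set μ : ℝ := (lam + 2 * (q - 1)) / 2 with hμdef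
  have hml : lam < μ := by rw [hμdef]; linarith
  have hμq : μ / 2 < q - 1 := by rw [hμdef]; linarith
  have hgρ : Filter.Tendsto (fun ρ => f (φ ρ) * F (φ ρ) / φ ρ) Filter.atTop (nhds (q - 1)) :=
    hgq.comp hφtop
  have hev : ∀ᶠ ρ in Filter.atTop, f (φ ρ) * F (φ ρ) / φ ρ ∈ Set.Ioo (μ / 2) q :=
    hgρ (Ioo_mem_nhds hμq (by linarith))
  obtain ⟨ρ', hρ'⟩ := Filter.eventually_atTop.mp hev
  refine ⟨max ρ₀ ρ', le_max_left _ _, (2 * q + 1) / (μ - lam),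
    div_pos (by linarith) (by linarith), ?_⟩
  set ρ₁ := max ρ₀ ρ' with hρ₁def
  intro ρ hρ
  have hsub : Set.Ici ρ₁ ⊆ Set.Ici ρ₀ := Set.Ici_subset_Ici.mpr (le_max_left _ _)
  have hφc : ContinuousOn φ (Set.Ici ρ₀) := fun r hr => (hφderiv r hr).continuousWithinAt
  have hφc1 : ContinuousOn φ (Set.Ici ρ₁) := hφc.mono hsub
  have hφmem : ∀ t ∈ Set.Ici ρ₁, φ t ∈ Set.Ioi 0 := fun t ht => hφpos t (hsub ht)
  have hφne : ∀ t ∈ Set.Ici ρ₁, φ t ≠ 0 := fun t ht => (hφmem t ht).out.ne'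
  have hfφ : ContinuousOn (fun τ => f (φ τ)) (Set.Ici ρ₁) :=
    hf.continuousOn.comp hφc1 hφmem
  have hFφ : ContinuousOn (fun τ => F (φ τ)) (Set.Ici ρ₁) :=
    hFcont.comp hφc1 hφmem
  have hf'φ : ContinuousOn (fun τ => deriv f (φ τ)) (Set.Ici ρ₁) :=
    hf'c.comp hφc1 hφmem
  have hgc : ContinuousOn (fun τ => f (φ τ) * F (φ τ) / φ τ) (Set.Ici ρ₁) :=
    (hfφ.mul hFφ).div hφc1 hφne
  have hEc : ContinuousOn (fun τ => deriv f (φ τ) * F (φ τ) - q) (Set.Ici ρ₁) :=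
    (hf'φ.mul hFφ).sub continuousOn_const
  have hHc : ContinuousOn (fun τ => f (φ τ) * F (φ τ) / φ τ - (q - 1)) (Set.Ici ρ₁) :=
    hgc.sub continuousOn_const
  have hbnd : ∀ t, ρ₁ ≤ t → f (φ t) * F (φ t) / φ t ∈ Set.Ioo (μ / 2) q :=
    fun t ht => hρ' t (le_trans (le_max_right ρ₀ ρ') ht)
  have hglb : ∀ t, ρ₁ ≤ t → μ ≤ 2 * (f (φ t) * F (φ t) / φ t) :=
    fun t ht => by have := (hbnd t ht).1; linarith
  have hgub : ∀ t, ρ₁ ≤ t → 2 * (f (φ t) * F (φ t) / φ t) ≤ 2 * q :=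
    fun t ht => by have := (hbnd t ht).2; linarith
  have hHd : ∀ t, ρ₁ < t → HasDerivAt (fun τ => f (φ τ) * F (φ τ) / φ τ - (q - 1))
      (2 * (f (φ t) * F (φ t) / φ t) *
        ((deriv f (φ t) * F (φ t) - q) - (f (φ t) * F (φ t) / φ t - (q - 1)))) t := by
    intro t ht
    have htρ₀ : ρ₀ < t := lt_of_le_of_lt (le_max_left _ _) ht
    have hφd : HasDerivAt φ (2 * f (φ t) * F (φ t)) t :=
      (hφderiv t htρ₀.le).hasDerivAt (Ici_mem_nhds htρ₀)
    have hφt : 0 < φ t := hφpos t htρ₀.le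
    have hNd : HasDerivAt (fun τ => f (φ τ) * F (φ τ))
        ((deriv f (φ t) * F (φ t) - 1) * (2 * f (φ t) * F (φ t))) t :=
      (hGd (φ t) hφt).comp t hφd
    have hQd := (hNd.div hφd hφt.ne').sub_const (q - 1)
    refine hQd.congr_deriv ?_
    field_simp
    ring
  have := core (fun τ => f (φ τ) * F (φ τ) / φ τ)
    (fun τ => deriv f (φ τ) * F (φ τ) - q)
    (fun τ => f (φ τ) * F (φ τ) / φ τ - (q - 1))
    ρ₁ ρ μ lam (2 * q) hρ hlam hml (by linarith) hgc hEc hHc hglb hgub hHd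
  exact this
end

section
/- Let λ > 0, ρ₀ ∈ ℝ, and let h : [ρ₀,∞) → [0,∞) be continuous with ∫_{ρ₀}^{∞} e^{λτ}·h(τ) dτ = ∞. Then ( ∫_{ρ₀}^{ρ} (1+(ρ−τ))·e^{−λ(ρ−τ)}·h(τ) dτ ) / ( (1+(ρ−ρ₀))·e^{−λ(ρ−ρ₀)} ) → ∞ as ρ → ∞. -/
/-- if `h ≥ 0` is continuous on `[ρ₀,∞)` and
`∫_{ρ₀}^{∞} e^{λτ} h(τ) dτ = ∞`, then
`(∫_{ρ₀}^{ρ} (1+(ρ−τ)) e^{−λ(ρ−τ)} h(τ) dτ) / ((1+(ρ−ρ₀)) e^{−λ(ρ−ρ₀)}) → ∞`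
as `ρ → ∞`. -/
theorem kernel_ratio_tendsto_atTop (lam ρ₀ : ℝ) (hlam : 0 < lam)
    (h : ℝ → ℝ)
    (hcont : ContinuousOn h (Set.Ici ρ₀))
    (hnonneg : ∀ τ ∈ Set.Ici ρ₀, 0 ≤ h τ)
    (hdiv : Filter.Tendsto (fun ρ => ∫ τ in ρ₀..ρ, Real.exp (lam * τ) * h τ)
      Filter.atTop Filter.atTop) :
    Filter.Tendsto
      (fun ρ =>
        (∫ τ in ρ₀..ρ, (1 + (ρ - τ)) * Real.exp (-lam * (ρ - τ)) * h τ) /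
          ((1 + (ρ - ρ₀)) * Real.exp (-lam * (ρ - ρ₀))))
      Filter.atTop Filter.atTop := by
  rw [Filter.tendsto_atTop]
  intro M
  -- choose R with big integral
  obtain ⟨R, hRbig, hRge⟩ :
      ∃ R, 2 * M * Real.exp (lam * ρ₀) ≤ (∫ τ in ρ₀..R, Real.exp (lam * τ) * h τ) ∧ ρ₀ ≤ R := by
    have := (hdiv.eventually_ge_atTop (2 * M * Real.exp (lam * ρ₀))).and
      (Filter.eventually_ge_atTop ρ₀)
    exact this.exists
  filter_upwards [Filter.eventually_ge_atTop R,
    Filter.eventually_ge_atTop (2 * R - ρ₀ - 1)] with ρ hρR hρ2R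
  have hρ0 : ρ₀ ≤ ρ := le_trans hRge hρR
  set D : ℝ := (1 + (ρ - ρ₀)) * Real.exp (-lam * (ρ - ρ₀)) with hD
  have hDpos : 0 < D := by
    apply mul_pos (by linarith) (Real.exp_pos _)
  set c : ℝ := (1 / 2) * D * Real.exp (-(lam * ρ₀)) with hc
  have hcpos : 0 < c := by positivity
  set f : ℝ → ℝ := fun τ => (1 + (ρ - τ)) * Real.exp (-lam * (ρ - τ)) * h τ with hf
  have hfcont : ContinuousOn f (Set.Icc ρ₀ ρ) := by
    apply ContinuousOn.mul
    · exact (Continuous.mul (by continuity) (by continuity)).continuousOn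
    · exact hcont.mono (fun x hx => hx.1)
  have hfint : ∀ a b : ℝ, ρ₀ ≤ a → a ≤ b → b ≤ ρ →
      IntervalIntegrable f MeasureTheory.volume a b := by
    intro a b ha hab hb
    apply (hfcont.mono _).intervalIntegrable
    rw [Set.uIcc_of_le hab]
    exact Set.Icc_subset_Icc ha hb
  -- split integral
  have hsplit : (∫ τ in ρ₀..R, f τ) ≤ ∫ τ in ρ₀..ρ, f τ := by
    have h1 := intervalIntegral.integral_add_adjacent_intervals
      (hfint ρ₀ R le_rfl hRge hρR) (hfint R ρ hRge hρR le_rfl)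
    have h2 : 0 ≤ ∫ τ in R..ρ, f τ := by
      apply intervalIntegral.integral_nonneg hρR
      intro u hu
      have hu0 : ρ₀ ≤ u := le_trans hRge hu.1
      have hh := hnonneg u hu0
      have h1u : (0:ℝ) ≤ 1 + (ρ - u) := by linarith [hu.2]
      exact mul_nonneg (mul_nonneg h1u (Real.exp_pos _).le) hh
    linarith
  -- pointwise bound on [ρ₀, R]
  have hpw : ∀ τ ∈ Set.Icc ρ₀ R, c * (Real.exp (lam * τ) * h τ) ≤ f τ := by
    intro τ hτ
    have hhτ : 0 ≤ h τ := hnonneg τ hτ.1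
    have hE : Real.exp (-lam * (ρ - ρ₀)) * Real.exp (-(lam * ρ₀)) * Real.exp (lam * τ)
        = Real.exp (-lam * (ρ - τ)) := by
      rw [← Real.exp_add, ← Real.exp_add]; ring_nf
    have hexp : c * Real.exp (lam * τ)
        = (1 / 2) * (1 + (ρ - ρ₀)) * Real.exp (-lam * (ρ - τ)) := by
      calc c * Real.exp (lam * τ)
          = (1 / 2) * (1 + (ρ - ρ₀)) *
            (Real.exp (-lam * (ρ - ρ₀)) * Real.exp (-(lam * ρ₀)) * Real.exp (lam * τ)) := by
            rw [hc, hD]; ring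
        _ = (1 / 2) * (1 + (ρ - ρ₀)) * Real.exp (-lam * (ρ - τ)) := by rw [hE]
    have hcoef : (1 / 2) * (1 + (ρ - ρ₀)) ≤ 1 + (ρ - τ) := by
      have := hτ.2
      linarith
    calc c * (Real.exp (lam * τ) * h τ)
        = ((1 / 2) * (1 + (ρ - ρ₀)) * Real.exp (-lam * (ρ - τ))) * h τ := by
          rw [← hexp]; ring
      _ ≤ ((1 + (ρ - τ)) * Real.exp (-lam * (ρ - τ))) * h τ := by
          apply mul_le_mul_of_nonneg_right _ hhτ
          exact mul_le_mul_of_nonneg_right hcoef (Real.exp_pos _).le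
      _ = f τ := rfl
  -- integrate the bound
  have hgint : IntervalIntegrable (fun τ => c * (Real.exp (lam * τ) * h τ))
      MeasureTheory.volume ρ₀ R := by
    apply ContinuousOn.intervalIntegrable
    rw [Set.uIcc_of_le hRge]
    exact (continuousOn_const.mul
      ((Real.continuous_exp.comp (continuous_const.mul continuous_id)).continuousOn.mul
        (hcont.mono (fun x hx => hx.1))))
  have hmono : (∫ τ in ρ₀..R, c * (Real.exp (lam * τ) * h τ)) ≤ ∫ τ in ρ₀..R, f τ :=
    intervalIntegral.integral_mono_on hRge hgint (hfint ρ₀ R le_rfl hRge hρR) hpw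
  have hconst : (∫ τ in ρ₀..R, c * (Real.exp (lam * τ) * h τ))
      = c * ∫ τ in ρ₀..R, Real.exp (lam * τ) * h τ :=
    intervalIntegral.integral_const_mul _ _
  have hfin : M * D ≤ ∫ τ in ρ₀..ρ, f τ := by
    have h3 : c * (2 * M * Real.exp (lam * ρ₀))
        ≤ c * ∫ τ in ρ₀..R, Real.exp (lam * τ) * h τ :=
      mul_le_mul_of_nonneg_left hRbig hcpos.le
    have hE1 : Real.exp (-(lam * ρ₀)) * Real.exp (lam * ρ₀) = 1 := by
      rw [← Real.exp_add]; simp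
    have h4 : c * (2 * M * Real.exp (lam * ρ₀)) = M * D := by
      rw [hc]; linear_combination M * D * hE1
    linarith [hsplit, hmono, hconst ▸ h3]
  rw [le_div_iff₀ hDpos]
  exact hfin
end

section
/- Let p > 1 and 1 < r < p. Then for every s > 1, f'(s)·F(s) = p/(p−1) + Σ_{k=1}^{∞} (−1)^{k−1} · (p−r)(1−k(p−r)) / ( (p+k(p−r)−1)(p+(k−1)(p−r)−1) ) · s^{−k(p−r)}, the series converging, where f(s) = s^p + s^r, f'(s) = p·s^{p−1} + r·s^{r−1}, and F(s) := ∫_s^∞ dt/(t^p + t^r). -/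
open MeasureTheory Set Real

/-- for `f(s) = s^p + s^r` with `p > 1`, `1 < r < p`, and every
`s > 1`, `f'(s)·F(s) = p/(p−1) + Σ_{k=1}^{∞} (−1)^{k−1}
(p−r)(1−k(p−r)) / ((p+k(p−r)−1)(p+(k−1)(p−r)−1)) · s^{−k(p−r)}`
(the sum below is indexed by `k ∈ ℕ` standing for `k+1 ≥ 1`), where
`f'(s) = p·s^{p−1} + r·s^{r−1}` and `F(s) = ∫_s^∞ dt/(t^p + t^r)`. -/
theorem f'F_series_expansion (p r : ℝ) (hp : 1 < p) (hr : 1 < r) (hrp : r < p)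
    (F : ℝ → ℝ)
    (hF : ∀ s : ℝ, F s = ∫ t in Set.Ioi s, (t ^ p + t ^ r)⁻¹) :
    ∀ s : ℝ, 1 < s →
      Summable (fun k : ℕ =>
        (-1 : ℝ) ^ k * ((p - r) * (1 - ((k : ℝ) + 1) * (p - r))) /
          ((p + ((k : ℝ) + 1) * (p - r) - 1) * (p + (k : ℝ) * (p - r) - 1)) *
          s ^ (-(((k : ℝ) + 1) * (p - r)))) ∧
      (p * s ^ (p - 1) + r * s ^ (r - 1)) * F s =
        p / (p - 1) + ∑' k : ℕ,
          (-1 : ℝ) ^ k * ((p - r) * (1 - ((k : ℝ) + 1) * (p - r))) /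
            ((p + ((k : ℝ) + 1) * (p - r) - 1) * (p + (k : ℝ) * (p - r) - 1)) *
            s ^ (-(((k : ℝ) + 1) * (p - r))) := by
  intro s hs
  have hs0 : (0:ℝ) < s := lt_trans one_pos hs
  have ha : (0:ℝ) < p - r := sub_pos.2 hrp
  have hq : (0:ℝ) < p - 1 := sub_pos.2 hp
  have hxk : ∀ (t:ℝ), 0 < t → ∀ (b : ℝ) (k:ℕ),
      t ^ (-(b + (k:ℝ) * (p-r))) = t ^ (-b) * (t ^ (-(p-r)))^k := by
    intro t ht b k
    rw [show -(b + (k:ℝ)*(p-r)) = -b + (-(p-r)) * (k:ℝ) by ring, Real.rpow_add ht,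
      Real.rpow_mul ht.le, Real.rpow_natCast]
  -- pointwise geometric expansion
  have hgeo : ∀ t:ℝ, 1 < t → ∑' k:ℕ, (-1:ℝ)^k * t ^ (-(p + (k:ℝ)*(p-r))) = (t^p + t^r)⁻¹ := by
    intro t ht
    have ht0 : 0 < t := lt_trans one_pos ht
    have hy1 : ‖-(t ^ (-(p-r)))‖ < 1 := by
      rw [norm_neg, Real.norm_eq_abs, abs_of_nonneg (Real.rpow_nonneg ht0.le _)]
      exact Real.rpow_lt_one_of_one_lt_of_neg ht (by linarith)
    have hterm : ∀ k:ℕ, (-1:ℝ)^k * t ^ (-(p + (k:ℝ)*(p-r))) = t^(-p) * (-(t^(-(p-r))))^k := by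
      intro k; rw [hxk t ht0 p k, neg_pow]; ring
    calc ∑' k:ℕ, (-1:ℝ)^k * t ^ (-(p + (k:ℝ)*(p-r)))
        = ∑' k:ℕ, t^(-p) * (-(t^(-(p-r))))^k := tsum_congr hterm
      _ = t^(-p) * (1 - (-(t^(-(p-r)))))⁻¹ := by
          rw [tsum_mul_left, tsum_geometric_of_norm_lt_one hy1]
      _ = (t^p + t^r)⁻¹ := by
          rw [sub_neg_eq_add, Real.rpow_neg ht0.le p, ← mul_inv]
          congr 1
          rw [mul_add, mul_one, ← Real.rpow_add ht0]
          congr 1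
          ring
  -- integral facts
  have hexp : ∀ k:ℕ, -(p + (k:ℝ)*(p-r)) < -1 := by
    intro k
    have : (0:ℝ) ≤ (k:ℝ)*(p-r) := mul_nonneg k.cast_nonneg ha.le
    linarith
  have hint : ∀ k:ℕ, IntegrableOn (fun t:ℝ => t ^ (-(p + (k:ℝ)*(p-r)))) (Ioi s) :=
    fun k => integrableOn_Ioi_rpow_of_lt (hexp k) hs0
  have hden : ∀ k:ℕ, (0:ℝ) < (p-1) + (k:ℝ)*(p-r) := by
    intro k
    have : (0:ℝ) ≤ (k:ℝ)*(p-r) := mul_nonneg k.cast_nonneg ha.le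
    linarith
  have hval : ∀ k:ℕ, ∫ t in Ioi s, t ^ (-(p + (k:ℝ)*(p-r)))
      = s ^ (-((p-1) + (k:ℝ)*(p-r))) / ((p-1) + (k:ℝ)*(p-r)) := by
    intro k
    rw [integral_Ioi_rpow_of_lt (hexp k) hs0,
      show -(p + (k:ℝ)*(p-r)) + 1 = -((p-1) + (k:ℝ)*(p-r)) by ring, neg_div_neg_eq]
  have hx0 : (0:ℝ) ≤ s ^ (-(p-r)) := Real.rpow_nonneg hs0.le _
  have hx1 : s ^ (-(p-r)) < 1 := Real.rpow_lt_one_of_one_lt_of_neg hs (by linarith)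
  -- summability of the integral values
  have hcnn : ∀ k:ℕ, 0 ≤ s ^ (-((p-1) + (k:ℝ)*(p-r))) / ((p-1) + (k:ℝ)*(p-r)) :=
    fun k => div_nonneg (Real.rpow_nonneg hs0.le _) (hden k).le
  have hbound : ∀ k:ℕ, s ^ (-((p-1) + (k:ℝ)*(p-r))) / ((p-1) + (k:ℝ)*(p-r))
      ≤ (s ^ (-(p-1)) / (p-1)) * (s ^ (-(p-r)))^k := by
    intro k
    rw [hxk s hs0 (p-1) k]
    calc s ^ (-(p-1)) * (s ^ (-(p-r)))^k / ((p-1) + (k:ℝ)*(p-r))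
        ≤ s ^ (-(p-1)) * (s ^ (-(p-r)))^k / (p-1) := by
          apply div_le_div_of_nonneg_left _ hq
          · have : (0:ℝ) ≤ (k:ℝ)*(p-r) := mul_nonneg k.cast_nonneg ha.le
            linarith
          · exact mul_nonneg (Real.rpow_nonneg hs0.le _) (pow_nonneg hx0 k)
      _ = (s ^ (-(p-1)) / (p-1)) * (s ^ (-(p-r)))^k := by ring
  have hcs : Summable (fun k:ℕ => s ^ (-((p-1) + (k:ℝ)*(p-r))) / ((p-1) + (k:ℝ)*(p-r))) :=
    Summable.of_nonneg_of_le hcnn hbound ((summable_geometric_of_lt_one hx0 hx1).mul_left _)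
  -- measurability
  have hmeas : ∀ k:ℕ, AEStronglyMeasurable
      (fun t:ℝ => (-1:ℝ)^k * t ^ (-(p + (k:ℝ)*(p-r)))) (volume.restrict (Ioi s)) := by
    intro k
    exact ((measurable_id.pow_const (-(p + (k:ℝ)*(p-r)))).const_mul _).aestronglyMeasurable
  -- lintegral bound
  have hlint : ∑' k:ℕ, ∫⁻ t in Ioi s, ‖(-1:ℝ)^k * t ^ (-(p + (k:ℝ)*(p-r)))‖₊ ≠ ⊤ := by
    have heq : ∀ k:ℕ, (∫⁻ t in Ioi s, ‖(-1:ℝ)^k * t ^ (-(p + (k:ℝ)*(p-r)))‖₊)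
        = ENNReal.ofReal (s ^ (-((p-1) + (k:ℝ)*(p-r))) / ((p-1) + (k:ℝ)*(p-r))) := by
      intro k
      rw [← hval k]
      have h1 : (∫⁻ t in Ioi s, ‖(-1:ℝ)^k * t ^ (-(p + (k:ℝ)*(p-r)))‖₊)
          = ∫⁻ t in Ioi s, ENNReal.ofReal (t ^ (-(p + (k:ℝ)*(p-r)))) := by
        apply lintegral_congr_ae
        filter_upwards [ae_restrict_mem measurableSet_Ioi] with t ht
        have ht0 : (0:ℝ) < t := lt_trans hs0 ht
        rw [← ENNReal.ofReal_coe_nnreal, coe_nnnorm, norm_mul, norm_pow, norm_neg, norm_one, one_pow,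
          one_mul, Real.norm_eq_abs, abs_of_nonneg (Real.rpow_nonneg ht0.le _)]
      rw [h1, ← ofReal_integral_eq_lintegral_ofReal (hint k)]
      filter_upwards [ae_restrict_mem measurableSet_Ioi] with t ht
      exact Real.rpow_nonneg (lt_trans hs0 ht).le _
    simp only [heq]
    rw [← ENNReal.ofReal_tsum_of_nonneg hcnn hcs]
    exact ENNReal.ofReal_ne_top
  -- F as a series
  have hF_eq : F s = ∑' k:ℕ, (-1:ℝ)^k *
      (s ^ (-((p-1) + (k:ℝ)*(p-r))) / ((p-1) + (k:ℝ)*(p-r))) := by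
    rw [hF s]
    rw [show (∫ t in Ioi s, (t^p + t^r)⁻¹)
        = ∫ t in Ioi s, ∑' k:ℕ, (-1:ℝ)^k * t ^ (-(p + (k:ℝ)*(p-r))) from
      setIntegral_congr_fun measurableSet_Ioi fun t ht => (hgeo t (lt_trans hs ht)).symm]
    rw [integral_tsum hmeas hlint]
    exact tsum_congr fun k => by rw [integral_const_mul, hval k]
  -- the algebraic rearrangement
  set x : ℝ := s ^ (-(p-r)) with hxdef
  have hp0 : (0:ℝ) < p := lt_trans one_pos hp
  have hr0 : (0:ℝ) < r := lt_trans one_pos hr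
  set A : ℕ → ℝ := fun k => p * (-1:ℝ)^k * x^k / ((p-1) + (k:ℝ)*(p-r)) with hAdef
  set B : ℕ → ℝ := fun k => r * (-1:ℝ)^k * x^(k+1) / ((p-1) + (k:ℝ)*(p-r)) with hBdef
  have habs : ∀ (k:ℕ) (C : ℝ) (y:ℝ), 0 ≤ y → |C * (-1:ℝ)^k * y / ((p-1) + (k:ℝ)*(p-r))|
      = |C| * y / ((p-1) + (k:ℝ)*(p-r)) := by
    intro k C y hy
    rw [abs_div, abs_mul, abs_mul, abs_pow, abs_neg, abs_one, one_pow, mul_one,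
      abs_of_nonneg hy, abs_of_pos (hden k)]
  have hgen : ∀ C : ℝ, Summable (fun k:ℕ => C * (-1:ℝ)^k * x^k / ((p-1) + (k:ℝ)*(p-r))) := by
    intro C
    apply Summable.of_norm_bounded (g := fun k => (|C|/(p-1)) * x^k)
      ((summable_geometric_of_lt_one hx0 hx1).mul_left _)
    intro k
    rw [Real.norm_eq_abs, habs k C _ (pow_nonneg hx0 k)]
    calc |C| * x^k / ((p-1) + (k:ℝ)*(p-r)) ≤ |C| * x^k / (p-1) := by
          apply div_le_div_of_nonneg_left (mul_nonneg (abs_nonneg C) (pow_nonneg hx0 k)) hq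
          have : (0:ℝ) ≤ (k:ℝ)*(p-r) := mul_nonneg k.cast_nonneg ha.le
          linarith
      _ = (|C|/(p-1)) * x^k := by ring
  have hA : Summable A := hgen p
  have hB : Summable B := by
    have := (hgen r).mul_left x
    apply this.congr
    intro k
    simp only [hBdef]
    ring
  have hA1 : Summable (fun k => A (k+1)) := (summable_nat_add_iff 1).2 hA
  -- product expansion
  have hprod : ∀ k:ℕ, (p * s^(p-1) + r * s^(r-1)) *
      ((-1:ℝ)^k * (s ^ (-((p-1) + (k:ℝ)*(p-r))) / ((p-1) + (k:ℝ)*(p-r)))) = A k + B k := by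
    intro k
    have h1 : s^(p-1) * s^(-((p-1)+(k:ℝ)*(p-r))) = x^k := by
      rw [hxk s hs0 (p-1) k, ← mul_assoc, ← Real.rpow_add hs0,
        show p - 1 + -(p-1) = 0 by ring, Real.rpow_zero, one_mul]
    have h2 : s^(r-1) * s^(-((p-1)+(k:ℝ)*(p-r))) = x^(k+1) := by
      rw [hxk s hs0 (p-1) k, ← mul_assoc, ← Real.rpow_add hs0,
        show r - 1 + -(p-1) = -(p-r) by ring, ← hxdef, pow_succ]
      ring
    simp only [hAdef, hBdef]
    rw [← h1, ← h2]
    ring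
  -- identification of shifted terms with target terms
  have hT : ∀ k:ℕ, A (k+1) + B k =
      (-1 : ℝ) ^ k * ((p - r) * (1 - ((k : ℝ) + 1) * (p - r))) /
        ((p + ((k : ℝ) + 1) * (p - r) - 1) * (p + (k : ℝ) * (p - r) - 1)) *
        s ^ (-(((k : ℝ) + 1) * (p - r))) := by
    intro k
    have hX : s ^ (-(((k : ℝ) + 1) * (p - r))) = x^(k+1) := by
      rw [show -(((k:ℝ)+1)*(p-r)) = (-(p-r)) * (((k:ℕ):ℝ)+1) by ring, hxdef,
        show ((k:ℕ):ℝ) + 1 = ((k+1:ℕ):ℝ) by push_cast; ring,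
        Real.rpow_mul hs0.le, Real.rpow_natCast]
    have hk0 : (0:ℝ) ≤ (k:ℝ)*(p-r) := mul_nonneg k.cast_nonneg ha.le
    have e1 : p + ((k:ℝ)+1)*(p-r) - 1 ≠ 0 := by nlinarith
    have e2 : p + (k:ℝ)*(p-r) - 1 ≠ 0 := by nlinarith
    have e3 : (p-1) + ((k:ℕ)+1:ℝ)*(p-r) ≠ 0 := by push_cast; nlinarith
    simp only [hAdef, hBdef, hX]
    push_cast
    field_simp
    ring
  have hTsum : Summable (fun k : ℕ =>
      (-1 : ℝ) ^ k * ((p - r) * (1 - ((k : ℝ) + 1) * (p - r))) /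
        ((p + ((k : ℝ) + 1) * (p - r) - 1) * (p + (k : ℝ) * (p - r) - 1)) *
        s ^ (-(((k : ℝ) + 1) * (p - r)))) := (hA1.add hB).congr hT
  refine ⟨hTsum, ?_⟩
  have hA0 : A 0 = p / (p-1) := by simp [hAdef]
  calc (p * s ^ (p - 1) + r * s ^ (r - 1)) * F s
      = ∑' k:ℕ, ((p * s^(p-1) + r * s^(r-1)) *
          ((-1:ℝ)^k * (s ^ (-((p-1) + (k:ℝ)*(p-r))) / ((p-1) + (k:ℝ)*(p-r))))) := by
        rw [hF_eq, tsum_mul_left]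
    _ = ∑' k:ℕ, (A k + B k) := tsum_congr hprod
    _ = (∑' k, A k) + ∑' k, B k := Summable.tsum_add hA hB
    _ = (A 0 + ∑' k, A (k+1)) + ∑' k, B k := by rw [Summable.tsum_eq_zero_add hA]
    _ = p/(p-1) + ((∑' k, A (k+1)) + ∑' k, B k) := by rw [hA0]; ring
    _ = p/(p-1) + ∑' k, (A (k+1) + B k) := by rw [Summable.tsum_add hA1 hB]
    _ = _ := by rw [tsum_congr hT]
end

section
/- Let p > 1 and r ∈ ℝ, and for s > 2 set F(s) := ∫_s^∞ du/(u^p (log u)^r) (which is finite). Then, as s → ∞, F(s) − 1/((p−1)·s^{p−1}·(log s)^r) + r/((p−1)²·s^{p−1}·(log s)^{r+1}) = O( 1/(s^{p−1}·(log s)^{r+2}) ). -/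
open Real MeasureTheory Set Filter Topology



lemma Flog_hasDerivAt (p r : ℝ) (hp : 1 < p) {u : ℝ} (hu : 2 < u) :
    HasDerivAt (fun x => 1 / ((p-1) * x ^ (p-1) * Real.log x ^ r)
        - r / ((p-1)^2 * x ^ (p-1) * Real.log x ^ (r+1)))
      (-(u ^ p * Real.log u ^ r)⁻¹
        + (r * (r+1) / (p-1)^2) * (u ^ p * Real.log u ^ (r+2))⁻¹) u := by
  have hu0 : (0:ℝ) < u := by linarith
  have hL : (0:ℝ) < Real.log u := Real.log_pos (by linarith)
  have hp1 : p - 1 ≠ 0 := by intro h; linarith [h]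
  have d1 : HasDerivAt (fun x : ℝ => x ^ (p-1)) ((p-1) * u^(p-1-1)) u :=
    Real.hasDerivAt_rpow_const (Or.inl hu0.ne')
  have dlog : HasDerivAt Real.log u⁻¹ u := Real.hasDerivAt_log hu0.ne'
  have d2 : ∀ q : ℝ, HasDerivAt (fun x : ℝ => Real.log x ^ q)
      (u⁻¹ * q * Real.log u ^ (q-1)) u :=
    fun q => dlog.rpow_const (Or.inl hL.ne')
  have hA : HasDerivAt (fun x : ℝ => (p-1) * x ^ (p-1) * Real.log x ^ r)
      (((p-1) * ((p-1) * u^(p-1-1))) * Real.log u ^ r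
        + ((p-1) * u ^ (p-1)) * (u⁻¹ * r * Real.log u ^ (r-1))) u :=
    (d1.const_mul (p-1)).mul (d2 r)
  have hB : HasDerivAt (fun x : ℝ => (p-1)^2 * x ^ (p-1) * Real.log x ^ (r+1))
      (((p-1)^2 * ((p-1) * u^(p-1-1))) * Real.log u ^ (r+1)
        + ((p-1)^2 * u ^ (p-1)) * (u⁻¹ * (r+1) * Real.log u ^ (r+1-1))) u :=
    (d1.const_mul ((p-1)^2)).mul (d2 (r+1))
  have hAne : (p-1) * u ^ (p-1) * Real.log u ^ r ≠ 0 := by positivity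
  have hBne : (p-1)^2 * u ^ (p-1) * Real.log u ^ (r+1) ≠ 0 := by positivity
  have key := (hA.inv hAne).sub ((hB.inv hBne).const_mul r)
  have hfun : (fun x : ℝ => ((p-1) * x ^ (p-1) * Real.log x ^ r)⁻¹
      - r * (((p-1)^2 * x ^ (p-1) * Real.log x ^ (r+1))⁻¹))
      = (fun x => 1 / ((p-1) * x ^ (p-1) * Real.log x ^ r)
        - r / ((p-1)^2 * x ^ (p-1) * Real.log x ^ (r+1))) := by
    funext x; rw [one_div, div_eq_mul_inv]
  change HasDerivAt (fun x : ℝ => ((p-1) * x ^ (p-1) * Real.log x ^ r)⁻¹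
      - r * (((p-1)^2 * x ^ (p-1) * Real.log x ^ (r+1))⁻¹)) _ u at key
  rw [hfun] at key
  convert key using 1
  have e1 : u ^ (p-1) = u ^ p / u := by
    rw [Real.rpow_sub hu0, Real.rpow_one]
  have e2 : u ^ (p-1-1) = u ^ p / u / u := by
    rw [Real.rpow_sub hu0, Real.rpow_one, Real.rpow_sub hu0, Real.rpow_one]
  have e3 : Real.log u ^ (r-1) = Real.log u ^ r / Real.log u := by
    rw [Real.rpow_sub hL, Real.rpow_one]
  have e4 : Real.log u ^ (r+1) = Real.log u ^ r * Real.log u := by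
    rw [Real.rpow_add hL, Real.rpow_one]
  have e5 : Real.log u ^ (r+1-1) = Real.log u ^ r := by norm_num
  have e6 : Real.log u ^ (r+2) = Real.log u ^ r * (Real.log u * Real.log u) := by
    rw [Real.rpow_add hL, show (2:ℝ) = (1:ℝ)+1 by norm_num, Real.rpow_add hL,
      Real.rpow_one]
  have hup : (0:ℝ) < u ^ p := Real.rpow_pos_of_pos hu0 p
  have hLr : (0:ℝ) < Real.log u ^ r := Real.rpow_pos_of_pos hL r
  rw [e1, e2, e3, e4, e5, e6]
  field_simp
  ring

lemma Flog_tendsto (a q : ℝ) (ha : 0 < a) :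
    Tendsto (fun x : ℝ => (x ^ a * Real.log x ^ q)⁻¹) atTop (𝓝 0) := by
  have h := (isLittleO_log_rpow_rpow_atTop (-q) (half_pos ha)).bound one_pos
  refine squeeze_zero' ?_ ?_ (tendsto_rpow_neg_atTop (half_pos ha))
  · filter_upwards [eventually_gt_atTop 2] with x hx
    have : (0:ℝ) < Real.log x := Real.log_pos (by linarith)
    positivity
  · filter_upwards [h, eventually_gt_atTop 2] with x hx hx2
    have hx0 : (0:ℝ) < x := by linarith
    have hL : (0:ℝ) < Real.log x := Real.log_pos (by linarith)
    have h1 : Real.log x ^ (-q) ≤ x ^ (a/2) := by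
      have := hx
      rwa [one_mul, Real.norm_eq_abs, Real.norm_eq_abs,
        abs_of_pos (Real.rpow_pos_of_pos hL _),
        abs_of_pos (Real.rpow_pos_of_pos hx0 _)] at this
    have : (x ^ a * Real.log x ^ q)⁻¹ = x ^ (-a) * Real.log x ^ (-q) := by
      rw [Real.rpow_neg hx0.le, Real.rpow_neg hL.le, mul_inv]
    rw [this]
    calc x ^ (-a) * Real.log x ^ (-q) ≤ x ^ (-a) * x ^ (a/2) :=
          mul_le_mul_of_nonneg_left h1 (Real.rpow_pos_of_pos hx0 _).le
    _ = x ^ (-(a/2)) := by rw [← Real.rpow_add hx0]; ring_nf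

lemma Flog_cont (p q : ℝ) :
    ContinuousOn (fun u : ℝ => (u ^ p * Real.log u ^ q)⁻¹) (Set.Ioi 2) := by
  intro u hu
  have hu2 : (2:ℝ) < u := hu
  have hu0 : (0:ℝ) < u := by linarith
  have hL : (0:ℝ) < Real.log u := Real.log_pos (by linarith)
  have c1 : ContinuousAt (fun x : ℝ => x ^ p) u :=
    Real.continuousAt_rpow_const u p (Or.inl hu0.ne')
  have c2 : ContinuousAt (fun x : ℝ => Real.log x ^ q) u :=
    (Real.continuousAt_rpow_const (Real.log u) q (Or.inl hL.ne')).comp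
      (Real.continuousAt_log hu0.ne')
  have hne : u ^ p * Real.log u ^ q ≠ 0 := by positivity
  exact ((c1.mul c2).inv₀ hne).continuousWithinAt

lemma Flog_aux_log_le {δ : ℝ} (hδ : 0 < δ) {s u : ℝ} (hs0 : 0 < s)
    (hls : δ⁻¹ ≤ Real.log s) (hsu : s ≤ u) :
    Real.log u ≤ (u / s) ^ δ * Real.log s := by
  have ht : (1:ℝ) ≤ u / s := (one_le_div hs0).2 hsu
  have ht0 : (0:ℝ) < u / s := lt_of_lt_of_le one_pos ht
  have htδ : (1:ℝ) ≤ (u/s) ^ δ := by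
    calc (1:ℝ) = (1:ℝ) ^ δ := (Real.one_rpow δ).symm
    _ ≤ (u/s) ^ δ := Real.rpow_le_rpow zero_le_one ht hδ.le
  have h1 : δ * Real.log (u / s) ≤ (u/s) ^ δ - 1 := by
    have := Real.log_le_sub_one_of_pos (Real.rpow_pos_of_pos ht0 δ)
    rwa [Real.log_rpow ht0] at this
  have h4 : Real.log u = Real.log s + Real.log (u/s) := by
    rw [Real.log_div (by linarith : u ≠ 0) (ne_of_gt hs0)]; ring
  have hδinv : (0:ℝ) < δ⁻¹ := by positivity
  have h5 : Real.log (u/s) ≤ δ⁻¹ * ((u/s)^δ - 1) := by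
    have := mul_le_mul_of_nonneg_left h1 hδinv.le
    calc Real.log (u/s) = δ⁻¹ * (δ * Real.log (u/s)) := by field_simp
    _ ≤ δ⁻¹ * ((u/s)^δ - 1) := this
  nlinarith [mul_le_mul_of_nonneg_left hls (by linarith : (0:ℝ) ≤ (u/s)^δ - 1)]

lemma Flog_claimA (p r : ℝ) (hp : 1 < p) :
    ∃ s₀ : ℝ, 3 ≤ s₀ ∧ ∀ s : ℝ, s₀ ≤ s → ∀ u : ℝ, s ≤ u →
      (u ^ p * Real.log u ^ (r+2))⁻¹ ≤
        (s ^ ((p-1)/2) * Real.log s ^ (r+2))⁻¹ * u ^ (-((p+1)/2)) := by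
  set q := r + 2 with hq
  set δ := (p-1)/(2*(|q|+1)) with hδdef
  have hδ : 0 < δ := by
    have : 0 < |q| + 1 := by positivity
    apply div_pos (by linarith) (by linarith)
  refine ⟨max 3 (Real.exp δ⁻¹), le_max_left _ _, ?_⟩
  intro s hs u hu
  have hs3 : (3:ℝ) ≤ s := le_trans (le_max_left _ _) hs
  have hs0 : (0:ℝ) < s := by linarith
  have hu0 : (0:ℝ) < u := by linarith
  have hLs : (0:ℝ) < Real.log s := Real.log_pos (by linarith)
  have hLu : (0:ℝ) < Real.log u := Real.log_pos (by linarith)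
  have hLsu : Real.log s ≤ Real.log u := (Real.log_le_log_iff hs0 hu0).2 hu
  have hls : δ⁻¹ ≤ Real.log s := by
    have := le_trans (le_max_right 3 (Real.exp δ⁻¹)) hs
    calc δ⁻¹ = Real.log (Real.exp δ⁻¹) := (Real.log_exp _).symm
    _ ≤ Real.log s := (Real.log_le_log_iff (Real.exp_pos _) hs0).2 this
  have ht1 : (1:ℝ) ≤ u / s := (one_le_div hs0).2 hu
  -- key : log u ^ (-q) ≤ (u/s)^((p-1)/2) * log s ^ (-q)
  have key : Real.log u ^ (-q) ≤ (u/s) ^ ((p-1)/2) * Real.log s ^ (-q) := by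
    rcases le_or_gt 0 q with hq0 | hq0
    · have h1 : Real.log u ^ (-q) ≤ Real.log s ^ (-q) :=
        Real.rpow_le_rpow_of_nonpos hLs hLsu (by linarith)
      have h2 : (1:ℝ) ≤ (u/s) ^ ((p-1)/2) := by
        calc (1:ℝ) = (1:ℝ) ^ ((p-1)/2) := (Real.one_rpow _).symm
        _ ≤ (u/s) ^ ((p-1)/2) := Real.rpow_le_rpow zero_le_one ht1 (by linarith)
      nlinarith [Real.rpow_pos_of_pos hLs (-q)]
    · have hnq : (0:ℝ) < -q := by linarith
      have h1 : Real.log u ≤ (u/s) ^ δ * Real.log s := Flog_aux_log_le hδ hs0 hls hu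
      have h2 : Real.log u ^ (-q) ≤ ((u/s) ^ δ * Real.log s) ^ (-q) :=
        Real.rpow_le_rpow hLu.le h1 hnq.le
      have h3 : ((u/s) ^ δ * Real.log s) ^ (-q)
          = (u/s) ^ (δ * (-q)) * Real.log s ^ (-q) := by
        rw [Real.mul_rpow (by positivity) hLs.le, ← Real.rpow_mul (by positivity)]
      have h4 : δ * (-q) ≤ (p-1)/2 := by
        rw [hδdef]
        rw [div_mul_eq_mul_div, div_le_div_iff₀ (by positivity) (by norm_num : (0:ℝ) < 2)]
        have habs : -q ≤ |q| + 1 := by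
          have := neg_abs_le q; linarith [abs_nonneg q]
        nlinarith [abs_nonneg q]
      have h5 : (u/s) ^ (δ * (-q)) ≤ (u/s) ^ ((p-1)/2) :=
        Real.rpow_le_rpow_of_exponent_le ht1 h4
      calc Real.log u ^ (-q) ≤ (u/s) ^ (δ * (-q)) * Real.log s ^ (-q) := by
            rw [← h3]; exact h2
      _ ≤ (u/s) ^ ((p-1)/2) * Real.log s ^ (-q) :=
            mul_le_mul_of_nonneg_right h5 (Real.rpow_pos_of_pos hLs _).le
  -- now multiply by u^(-p)
  have lhs_eq : (u ^ p * Real.log u ^ q)⁻¹ = u ^ (-p) * Real.log u ^ (-q) := by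
    rw [Real.rpow_neg hu0.le, Real.rpow_neg hLu.le, mul_inv]
  have step : u ^ (-p) * Real.log u ^ (-q)
      ≤ u ^ (-p) * ((u/s) ^ ((p-1)/2) * Real.log s ^ (-q)) :=
    mul_le_mul_of_nonneg_left key (Real.rpow_pos_of_pos hu0 _).le
  have rhs_eq : u ^ (-p) * ((u/s) ^ ((p-1)/2) * Real.log s ^ (-q))
      = (s ^ ((p-1)/2) * Real.log s ^ q)⁻¹ * u ^ (-((p+1)/2)) := by
    rw [Real.div_rpow hu0.le hs0.le, Real.rpow_neg hLs.le, mul_inv,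
      Real.rpow_neg hu0.le p]
    have : u ^ (-((p+1)/2)) = (u ^ p)⁻¹ * u ^ ((p-1)/2) := by
      rw [← Real.rpow_neg hu0.le p, ← Real.rpow_add hu0,
        show -p + (p-1)/2 = -((p+1)/2) by ring]
    rw [this]
    ring
  calc (u ^ p * Real.log u ^ q)⁻¹ = u ^ (-p) * Real.log u ^ (-q) := lhs_eq
  _ ≤ u ^ (-p) * ((u/s) ^ ((p-1)/2) * Real.log s ^ (-q)) := step
  _ = (s ^ ((p-1)/2) * Real.log s ^ q)⁻¹ * u ^ (-((p+1)/2)) := rhs_eq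

/-- for `p > 1`, `r ∈ ℝ` and `F(s) = ∫_s^∞ du/(u^p (log u)^r)`
(finite for `s > 2`), as `s → ∞`,
`F(s) − 1/((p−1) s^{p−1} (log s)^r) + r/((p−1)² s^{p−1} (log s)^{r+1})
  = O(1/(s^{p−1} (log s)^{r+2}))`. -/
theorem F_log_expansion (p r : ℝ) (hp : 1 < p)
    (F : ℝ → ℝ)
    (hF : ∀ s : ℝ, 2 < s →
      F s = ∫ u in Set.Ioi s, (u ^ p * Real.log u ^ r)⁻¹)
    (hfin : ∀ s : ℝ, 2 < s →
      MeasureTheory.IntegrableOn (fun u => (u ^ p * Real.log u ^ r)⁻¹)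
        (Set.Ioi s)) :
    ∃ C : ℝ, 0 < C ∧ ∀ᶠ s in Filter.atTop,
      |F s - 1 / ((p - 1) * s ^ (p - 1) * Real.log s ^ r)
          + r / ((p - 1) ^ 2 * s ^ (p - 1) * Real.log s ^ (r + 1))| ≤
        C * (1 / (s ^ (p - 1) * Real.log s ^ (r + 2))) := by
  obtain ⟨s₀, hs₀3, hclaim⟩ := Flog_claimA p r hp
  set K : ℝ := r * (r + 1) / (p - 1) ^ 2 with hK
  have hp1 : (0:ℝ) < p - 1 := by linarith
  set C : ℝ := |K| * (2 / (p - 1)) + 1 with hC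
  have hCpos : 0 < C := by
    have h2 : (0:ℝ) < 2 / (p - 1) := div_pos two_pos hp1
    have : 0 ≤ |K| * (2 / (p - 1)) := mul_nonneg (abs_nonneg K) h2.le
    rw [hC]; linarith
  refine ⟨C, hCpos, ?_⟩
  filter_upwards [eventually_ge_atTop s₀] with s hs
  have hs3 : (3:ℝ) ≤ s := le_trans hs₀3 hs
  have hs2 : (2:ℝ) < s := by linarith
  have hs0 : (0:ℝ) < s := by linarith
  have hLs : (0:ℝ) < Real.log s := Real.log_pos (by linarith)
  set g : ℝ → ℝ := fun u => (u ^ p * Real.log u ^ (r + 2))⁻¹ with hg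
  set M : ℝ := (s ^ ((p - 1) / 2) * Real.log s ^ (r + 2))⁻¹ with hM
  have hlt : -((p + 1) / 2) < -1 := by linarith
  have meas_g : AEStronglyMeasurable g (volume.restrict (Ioi s)) :=
    ((Flog_cont p (r + 2)).mono (Ioi_subset_Ioi hs2.le)).aestronglyMeasurable
      measurableSet_Ioi
  have hbint : IntegrableOn (fun u : ℝ => M * u ^ (-((p + 1) / 2))) (Ioi s) :=
    (integrableOn_Ioi_rpow_of_lt hlt hs0).const_mul M
  have hgb : ∀ u ∈ Ioi s, g u ≤ M * u ^ (-((p + 1) / 2)) := fun u hu =>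
    hclaim s hs u (le_of_lt hu)
  have hgpos : ∀ u ∈ Ioi s, 0 < g u := by
    intro u hu
    have hu2 : (2:ℝ) < u := lt_trans hs2 hu
    have hu0 : (0:ℝ) < u := by linarith
    have : (0:ℝ) < Real.log u := Real.log_pos (by linarith)
    positivity
  have intg : IntegrableOn g (Ioi s) := by
    refine hbint.mono' meas_g ?_
    refine (ae_restrict_iff' measurableSet_Ioi).2 (ae_of_all _ fun u hu => ?_)
    rw [Real.norm_eq_abs, abs_of_pos (hgpos u hu)]
    exact hgb u hu
  set I : ℝ := ∫ u in Ioi s, g u with hI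
  have I_nonneg : 0 ≤ I :=
    setIntegral_nonneg measurableSet_Ioi fun u hu => (hgpos u hu).le
  have hhalf : s ^ ((p - 1) / 2) * s ^ ((p - 1) / 2) = s ^ (p - 1) := by
    rw [← Real.rpow_add hs0]; ring_nf
  have I_le : I ≤ (2 / (p - 1)) * (s ^ (p - 1) * Real.log s ^ (r + 2))⁻¹ := by
    have h1 : I ≤ ∫ u in Ioi s, M * u ^ (-((p + 1) / 2)) :=
      setIntegral_mono_on intg hbint measurableSet_Ioi hgb
    have h2 : (∫ u in Ioi s, M * u ^ (-((p + 1) / 2)))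
        = M * (-s ^ (-((p + 1) / 2) + 1) / (-((p + 1) / 2) + 1)) := by
      rw [MeasureTheory.integral_const_mul, integral_Ioi_rpow_of_lt hlt hs0]
    have h3 : M * (-s ^ (-((p + 1) / 2) + 1) / (-((p + 1) / 2) + 1))
        = (2 / (p - 1)) * (s ^ (p - 1) * Real.log s ^ (r + 2))⁻¹ := by
      rw [show -((p + 1) / 2) + 1 = -((p - 1) / 2) by ring,
        Real.rpow_neg hs0.le, ← hhalf, hM, neg_div_neg_eq]
      have hA : s ^ ((p - 1) / 2) ≠ 0 := (Real.rpow_pos_of_pos hs0 _).ne'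
      have hL2 : Real.log s ^ (r + 2) ≠ 0 := (Real.rpow_pos_of_pos hLs _).ne'
      field_simp [hp1.ne']
    calc I ≤ ∫ u in Ioi s, M * u ^ (-((p + 1) / 2)) := h1
    _ = (2 / (p - 1)) * (s ^ (p - 1) * Real.log s ^ (r + 2))⁻¹ := by rw [h2, h3]
  -- FTC part
  set h : ℝ → ℝ := fun x => 1 / ((p - 1) * x ^ (p - 1) * Real.log x ^ r)
      - r / ((p - 1) ^ 2 * x ^ (p - 1) * Real.log x ^ (r + 1)) with hh
  set h' : ℝ → ℝ := fun x => -(x ^ p * Real.log x ^ r)⁻¹ + K * g x with hh'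
  have hint' : IntegrableOn h' (Ioi s) := ((hfin s hs2).neg).add (intg.const_mul K)
  have hder : ∀ x ∈ Ioi s, HasDerivAt h (h' x) x := fun x hx =>
    Flog_hasDerivAt p r hp (lt_trans hs2 hx)
  have hcont : ContinuousWithinAt h (Ici s) s :=
    (Flog_hasDerivAt p r hp hs2).continuousAt.continuousWithinAt
  have htd : Tendsto h atTop (𝓝 0) := by
    have heq : h = fun x => (p - 1)⁻¹ * (x ^ (p - 1) * Real.log x ^ r)⁻¹
        - (r * ((p - 1) ^ 2)⁻¹) * (x ^ (p - 1) * Real.log x ^ (r + 1))⁻¹ := by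
      funext x
      simp only [hh, one_div, div_eq_mul_inv, mul_inv, mul_assoc]
      ring
    rw [heq]
    have t1 := (Flog_tendsto (p - 1) r hp1).const_mul ((p - 1):ℝ)⁻¹
    have t2 := (Flog_tendsto (p - 1) (r + 1) hp1).const_mul (r * ((p - 1) ^ 2)⁻¹)
    simpa using t1.sub t2
  have ftc : ∫ x in Ioi s, h' x = 0 - h s :=
    integral_Ioi_of_hasDerivAt_of_tendsto hcont hder hint' htd
  have split : ∫ x in Ioi s, h' x = -(F s) + K * I := by
    have int1 : IntegrableOn (fun u : ℝ => -((u ^ p * Real.log u ^ r)⁻¹)) (Ioi s) :=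
      (hfin s hs2).neg
    simp only [hh']
    rw [MeasureTheory.integral_add int1 (intg.const_mul K),
      MeasureTheory.integral_neg, MeasureTheory.integral_const_mul, ← hF s hs2]
  have main_eq : F s - 1 / ((p - 1) * s ^ (p - 1) * Real.log s ^ r)
      + r / ((p - 1) ^ 2 * s ^ (p - 1) * Real.log s ^ (r + 1)) = K * I := by
    have hhs : h s = 1 / ((p - 1) * s ^ (p - 1) * Real.log s ^ r)
        - r / ((p - 1) ^ 2 * s ^ (p - 1) * Real.log s ^ (r + 1)) := rfl
    rw [split, hhs] at ftc
    linarith [ftc]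
  rw [main_eq, abs_mul, abs_of_nonneg I_nonneg, one_div]
  have Rpos : (0:ℝ) < (s ^ (p - 1) * Real.log s ^ (r + 2))⁻¹ := by positivity
  calc |K| * I ≤ |K| * ((2 / (p - 1)) * (s ^ (p - 1) * Real.log s ^ (r + 2))⁻¹) :=
        mul_le_mul_of_nonneg_left I_le (abs_nonneg K)
  _ = (|K| * (2 / (p - 1))) * (s ^ (p - 1) * Real.log s ^ (r + 2))⁻¹ := by ring
  _ ≤ C * (s ^ (p - 1) * Real.log s ^ (r + 2))⁻¹ := by
      apply mul_le_mul_of_nonneg_right _ Rpos.le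
      rw [hC]; linarith
end
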